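/- arXiv:2510.16330 — 3 statements merged into one kernel-verified Lean document; each statement's English description precedes it below -/
import Mathlib

section
/- Let l ∈ ℕ ∪ {∞} and let G be a hypergraph with l-degeneracy κ_l(G) and rank r(G). Then there exists a linear ordering of V(G) such that, in the directed acyclic hypergraph G⃗ obtained by equipping G with this ordering, every vertex has l-outdegree at most κ_l(G) · r(G). -/
open scoped Classical

noncomputable section

/-- A hypergraph: a finite vertex set and a finite set of hyperedges, with vertices in `ℕ`. -/
structure HGraph where
  verts : Finset ℕ
  edges : Finset (Finset ℕ)

namespace HGraph

/-- Well-formedness: every hyperedge is a nonempty subset of the vertex set. -/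
def Good (G : HGraph) : Prop := ∀ e ∈ G.edges, e ⊆ G.verts ∧ e.Nonempty

/-- The rank of a hypergraph: the maximum arity of a hyperedge. -/
def rank (G : HGraph) : ℕ := G.edges.sup Finset.card

/-- The induced `l`-trimmed subhypergraph of `G` on `S`. -/
def trim (G : HGraph) (S : Finset ℕ) (l : ℕ∞) : HGraph :=
  ⟨G.verts ∩ S,
    (G.edges.filter fun e => ((e \ S).card : ℕ∞) ≤ l ∧ (e ∩ S).Nonempty).image fun e => e ∩ S⟩

/-- The degree of a vertex: the number of hyperedges containing it. -/
def degree (G : HGraph) (v : ℕ) : ℕ := (G.edges.filter fun e => v ∈ e).card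

/-- The `l`-degeneracy of a hypergraph: the least `κ` such that every nonempty induced
`l`-trimmed subhypergraph has a vertex of degree at most `κ`. -/
def degeneracy (G : HGraph) (l : ℕ∞) : ℕ :=
  sInf {κ : ℕ | ∀ S ⊆ G.verts, S.Nonempty → ∃ v ∈ S, (G.trim S l).degree v ≤ κ}

/-- Two vertices are adjacent if some hyperedge contains both. -/
def Adj (G : HGraph) (u v : ℕ) : Prop := ∃ e ∈ G.edges, u ∈ e ∧ v ∈ e

/-- A hypergraph is connected if any two vertices are joined by a path of adjacencies. -/
def Connected (G : HGraph) : Prop :=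
  ∀ u ∈ G.verts, ∀ v ∈ G.verts, Relation.ReflTransGen G.Adj u v

/-- `D` is a connected component of `G`. -/
def IsComponent (G : HGraph) (D : Finset ℕ) : Prop :=
  ∃ v ∈ G.verts, D = G.verts.filter fun u => Relation.ReflTransGen G.Adj v u

/-- The induced subhypergraph (only hyperedges entirely inside `S`). -/
def induce (G : HGraph) (S : Finset ℕ) : HGraph :=
  ⟨G.verts ∩ S, G.edges.filter fun e => e ⊆ S⟩

end HGraph

/-- `f` is a homomorphism from `H` to `G`. -/
def IsHom (H G : HGraph) (f : ℕ → ℕ) : Prop :=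
  (∀ v ∈ H.verts, f v ∈ G.verts) ∧ ∀ e ∈ H.edges, e.image f ∈ G.edges

/-- `Hom(G,H)`: the number of homomorphisms from `H` to `G`
(normalized to be `0` off `V(H)` so that the set is finite). -/
def homCount (G H : HGraph) : ℕ :=
  Set.ncard {f : ℕ → ℕ | IsHom H G f ∧ ∀ v ∉ H.verts, f v = 0}

/-- `Homr(G,H)`: the number of arity-preserving homomorphisms from `H` to `G`. -/
def homrCount (G H : HGraph) : ℕ :=
  Set.ncard {f : ℕ → ℕ | IsHom H G f ∧ (∀ e ∈ H.edges, (e.image f).card = e.card) ∧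
    ∀ v ∉ H.verts, f v = 0}

/-- HGraph isomorphism. -/
def Isomorphic (H H' : HGraph) : Prop :=
  ∃ f : ℕ → ℕ, Set.BijOn f ↑H.verts ↑H'.verts ∧
    H'.edges = H.edges.image fun e => e.image f

/-- The quotient of `H` under the partition of `V(H)` into the fibers of `f`. -/
def quotientBy (H : HGraph) (f : ℕ → ℕ) : HGraph :=
  ⟨H.verts.image f, H.edges.image fun e => e.image f⟩

/-- `H'` is a quotient of `H` (by some partition of `V(H)`). -/
def IsQuotient (H H' : HGraph) : Prop := ∃ f : ℕ → ℕ, H' = quotientBy H f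

/-- Each fiber of `f` induces a connected (trimmed) subhypergraph of `H`. -/
def ContractMap (H : HGraph) (f : ℕ → ℕ) : Prop :=
  ∀ w : ℕ, (H.trim (H.verts.filter fun v => f v = w) ⊤).Connected

/-- `H'` belongs to the contract set `Q^c(H)`: it is a quotient of `H` by a partition
all of whose parts induce connected subhypergraphs of `H`. -/
def IsContractQuotient (H H' : HGraph) : Prop :=
  ∃ f : ℕ → ℕ, ContractMap H f ∧ H' = quotientBy H f

/-- `α(H')`: the number of partitions `τ` of `V(H)` with connected parts with `H/τ ≅ H'`. -/
def alphaCount (H H' : HGraph) : ℕ :=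
  Set.ncard {P : Finset (Finset ℕ) | ∃ f : ℕ → ℕ, ContractMap H f ∧
    Isomorphic (quotientBy H f) H' ∧
    P = (H.verts.image f).image fun w => H.verts.filter fun v => f v = w}

/-- `|Aut(H')|`: the number of automorphisms of `H'`. -/
def autCount (H' : HGraph) : ℕ :=
  Set.ncard {f : ℕ → ℕ | (∀ v ∉ H'.verts, f v = v) ∧ Set.BijOn f ↑H'.verts ↑H'.verts ∧
    H'.edges.image (fun e => e.image f) = H'.edges}

/-- The arc relation of the `l`-skeleton of the DAH obtained by ordering `G` by `π`. -/
def SkelArc (G : HGraph) (π : ℕ → ℕ) (l : ℕ∞) (u v : ℕ) : Prop :=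
  ∃ e ∈ G.edges, u ∈ e ∧ v ∈ e ∧ π u < π v ∧
    ((e.filter fun w => π w < π u).card : ℕ∞) ≤ l

/-- The `l`-outdegree of a vertex in the DAH `(G, π)`. -/
def loutdeg (G : HGraph) (π : ℕ → ℕ) (l : ℕ∞) (u : ℕ) : ℕ :=
  (G.verts.filter fun v => SkelArc G π l u v).card

/-- Vertices reachable from `v` by a directed path. -/
def Reach (Adj : ℕ → ℕ → Prop) (v : ℕ) : Set ℕ := {u | Relation.ReflTransGen Adj v u}

/-- Vertices reachable from a set `A`. -/
def ReachSet (Adj : ℕ → ℕ → Prop) (A : Set ℕ) : Set ℕ :=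
  {u | ∃ a ∈ A, Relation.ReflTransGen Adj a u}

/-- The sources of a DAG: vertices with no incoming arc. -/
def sourcesOf (V : Finset ℕ) (Adj : ℕ → ℕ → Prop) : Finset ℕ :=
  V.filter fun v => ¬ ∃ u ∈ V, Adj u v

/-- `b` lies on the (unique) path between `i` and `j` in `T`. -/
def OnPath {n : ℕ} (T : SimpleGraph (Fin n)) (i j b : Fin n) : Prop :=
  ∃ p : T.Walk i j, p.IsPath ∧ b ∈ p.support

/-- `(T, β)` is a DAG-tree decomposition of the DAG `(V, Adj)`. -/
def IsDTD (V : Finset ℕ) (Adj : ℕ → ℕ → Prop) {n : ℕ}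
    (T : SimpleGraph (Fin n)) (β : Fin n → Finset ℕ) : Prop :=
  T.IsTree ∧ (∀ i, β i ⊆ sourcesOf V Adj) ∧ (∀ s ∈ sourcesOf V Adj, ∃ i, s ∈ β i) ∧
    ∀ i j b, OnPath T i j b →
      ReachSet Adj ↑(β i) ∩ ReachSet Adj ↑(β j) ⊆ ReachSet Adj ↑(β b)

/-- The DAG-treewidth of the DAG `(V, Adj)`. -/
def dagTreewidth (V : Finset ℕ) (Adj : ℕ → ℕ → Prop) : ℕ :=
  sInf {w : ℕ | ∃ (n : ℕ) (T : SimpleGraph (Fin n)) (β : Fin n → Finset ℕ),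
    IsDTD V Adj T β ∧ ∀ i, (β i).card ≤ w}

/-- The `l`-DAG-treewidth of the DAH `(H, π)`. -/
def ldtwOriented (H : HGraph) (π : ℕ → ℕ) (l : ℕ∞) : ℕ :=
  dagTreewidth H.verts (SkelArc H π l)

/-- The `l`-DAG-treewidth of an undirected hypergraph:
the maximum over all acyclic orientations. -/
def ldtw (H : HGraph) (l : ℕ∞) : ℕ :=
  sSup {w : ℕ | ∃ π : ℕ → ℕ, Set.InjOn π ↑H.verts ∧ w = ldtwOriented H π l}

/-- `f` is a DAH homomorphism from `(K, πK)` to `(G, πG)`. -/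
def IsDAHHom (K : HGraph) (πK : ℕ → ℕ) (G : HGraph) (πG : ℕ → ℕ)
    (f : ℕ → ℕ) : Prop :=
  (∀ v ∈ K.verts, f v ∈ G.verts) ∧
    ∀ e ∈ K.edges, e.image f ∈ G.edges ∧
      ∀ u ∈ e, ∀ v ∈ e, πK u < πK v → πG (f u) < πG (f v)

/-- The number of DAH homomorphisms from `(K, πK)` to `(G, πG)`. -/
def dahHomCount (G : HGraph) (πG : ℕ → ℕ) (K : HGraph) (πK : ℕ → ℕ) : ℕ :=
  Set.ncard {f : ℕ → ℕ | IsDAHHom K πK G πG f ∧ ∀ v ∉ K.verts, f v = 0}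

/-- Two orderings of `H` give isomorphic acyclic orientations. -/
def OrientIso (H : HGraph) (π₁ π₂ : ℕ → ℕ) : Prop :=
  ∃ g : ℕ → ℕ, Set.BijOn g ↑H.verts ↑H.verts ∧
    (H.edges.image fun e => e.image g) = H.edges ∧
    ∀ u ∈ H.verts, ∀ v ∈ H.verts, (π₁ u < π₁ v ↔ π₂ (g u) < π₂ (g v))

/-- The vertices of `H` that are `l`-reachable from the set `S` in the DAH `(H, π)`. -/
def reachClosure (H : HGraph) (π : ℕ → ℕ) (l : ℕ∞) (S : Set ℕ) : Finset ℕ :=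
  H.verts.filter fun v => v ∈ ReachSet (SkelArc H π l) S

/-- `H⃗[S]_l`: the sub-DAH induced (0-trimmed) on the vertices `l`-reachable from `S`. -/
def subDAH (H : HGraph) (π : ℕ → ℕ) (l : ℕ∞) (S : Set ℕ) : HGraph :=
  H.trim (reachClosure H π l S) 0

/-- `B'` is a child of `B` in the tree `T` rooted at `root`. -/
def IsChild {n : ℕ} (T : SimpleGraph (Fin n)) (root B B' : Fin n) : Prop :=
  T.Adj B B' ∧ OnPath T root B' B

/-- `Γ(B)`: the union of the bags in the subtree of `T` rooted at `B`. -/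
def GammaSet {n : ℕ} (T : SimpleGraph (Fin n)) (root : Fin n)
    (β : Fin n → Finset ℕ) (B : Fin n) : Set ℕ :=
  {s | ∃ i, OnPath T root i B ∧ s ∈ β i}

/-- `ext(φ, K⃗, G⃗)` relative to the agreement domain `dom`: the number of DAH homomorphisms
from `(K, πK)` to `(G, πG)` that agree with `φ` on `V(K) ∩ dom`. -/
def extCount (K : HGraph) (πK : ℕ → ℕ) (G : HGraph) (πG : ℕ → ℕ)
    (dom : Set ℕ) (φ : ℕ → ℕ) : ℕ :=
  Set.ncard {ψ : ℕ → ℕ | IsDAHHom K πK G πG ψ ∧ (∀ v ∉ K.verts, ψ v = 0) ∧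
    ∀ v ∈ (↑K.verts : Set ℕ) ∩ dom, ψ v = φ v}

/-- The hyperedges `E_i` associated to a core `C` and a component `D`. -/
def obstructionEdges (H : HGraph) (C D : Finset ℕ) : Finset (Finset ℕ) :=
  H.edges.filter fun e => e ⊆ C ∪ D ∧ 1 < e.card

/-- `H` is an `l`-obstruction (a member of `𝓗_l`). -/
def IsLObstruction (l : ℕ∞) (H : HGraph) : Prop :=
  ∃ k, 3 ≤ k ∧ ∃ C ⊆ H.verts, C.card = k ∧
    (∀ e ∈ (H.trim C l).edges, e.card ≤ 1) ∧
    (∀ D : Finset ℕ, (H.trim (H.verts \ C) ⊤).IsComponent D →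
      ¬ C ⊆ (obstructionEdges H C D).biUnion id) ∧
    ∃ Dmap : ℕ → Finset ℕ, Set.InjOn Dmap ↑C ∧
      ∀ c ∈ C, (H.trim (H.verts \ C) ⊤).IsComponent (Dmap c) ∧
        C.erase c ⊆ (obstructionEdges H C (Dmap c)).biUnion id ∧
        ∀ e ∈ obstructionEdges H C (Dmap c), c ∉ e

/-- `H` is `𝓗_l` ITS free: no induced ∞-trimmed subhypergraph is an `l`-obstruction. -/
def ITSFree (l : ℕ∞) (H : HGraph) : Prop :=
  ∀ S ⊆ H.verts, ¬ IsLObstruction l (H.trim S ⊤)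

/-- The hypergraph `(Hv, He)` is an `l`-connector of `X ⊆ Hv`. -/
def IsConnector (l : ℕ∞) (Hv : Finset ℕ) (He : Finset (Finset ℕ)) (X : Finset ℕ) : Prop :=
  X ⊆ Hv ∧ HGraph.Connected ⟨Hv, He⟩ ∧
    (∀ e ∈ He, 2 ≤ (e ∩ X).card → l < ((e \ X).card : ℕ∞)) ∧
    ∃ V' : Finset ℕ, (HGraph.trim ⟨Hv, He⟩ (Hv \ X) ⊤).IsComponent V' ∧
      ∀ xx ∈ X, ∃ v ∈ V', ∃ e ∈ He, xx ∈ e ∧ v ∈ e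

/-- Witness data for membership of `H` in `𝓗_{l,k}`. -/
def InHlkWitness (l : ℕ∞) (k : ℕ) (H : HGraph)
    (x : ℕ → ℕ) (Vp : ℕ → Finset ℕ) (Ep : ℕ → Finset (Finset ℕ)) : Prop :=
  Set.InjOn x ↑(Finset.range k) ∧
  (∀ i < k, ∀ j < k, i ≠ j → Disjoint (Vp i) (Vp j)) ∧
  (∀ i < k, Disjoint (Vp i) ((Finset.range k).image x)) ∧
  H.verts = (Finset.range k).image x ∪ (Finset.range k).biUnion Vp ∧
  (∀ i < k, ∀ j < k, i ≠ j → Disjoint (Ep i) (Ep j)) ∧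
  H.edges = (Finset.range k).biUnion Ep ∧
  ∀ i < k,
    (∀ e ∈ Ep i, e ⊆ Vp i ∪ (((Finset.range k).image x).erase (x i))) ∧
    IsConnector l (Vp i ∪ (((Finset.range k).image x).erase (x i))) (Ep i)
      (((Finset.range k).image x).erase (x i))

/-- `H ∈ 𝓗_{l,k}`. -/
def InHlk (l : ℕ∞) (k : ℕ) (H : HGraph) : Prop :=
  ∃ x Vp Ep, InHlkWitness l k H x Vp Ep

/-- The DAG `(V, Adj)` contains a `k`-reachable-cycle. -/
def HasReachCycle (V : Finset ℕ) (Adj : ℕ → ℕ → Prop) (k : ℕ) : Prop :=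
  ∃ x y : ZMod k → ℕ, Function.Injective x ∧ Function.Injective y ∧
    (∀ i, x i ∈ V) ∧ (∀ i, y i ∈ V) ∧
    (∀ i, x i ∈ Reach Adj (y i) ∧ x (i + 1) ∈ Reach Adj (y i)) ∧
    ∀ v ∈ V, 2 ≤ (Set.range x ∩ Reach Adj v).ncard →
      ∃ i, Set.range x ∩ Reach Adj v = {x i, x (i + 1)}

/-- `(x, y)` form a `k`-reachable-simplex in the DAG `(V, Adj)`. -/
def IsReachSimplexPair (V : Finset ℕ) (Adj : ℕ → ℕ → Prop) {k : ℕ}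
    (x y : Fin k → ℕ) : Prop :=
  Function.Injective x ∧ Function.Injective y ∧
    (∀ i, x i ∈ V) ∧ (∀ i, y i ∈ V) ∧
    (∀ i j, j ≠ i → x j ∈ Reach Adj (y i)) ∧
    ¬ ∃ v ∈ V, ∀ i, x i ∈ Reach Adj v

/-- The DAG `(V, Adj)` contains a `k`-reachable-simplex. -/
def HasReachSimplex (V : Finset ℕ) (Adj : ℕ → ℕ → Prop) (k : ℕ) : Prop :=
  ∃ x y : Fin k → ℕ, IsReachSimplexPair V Adj x y

/-- `F` is α-acyclic. -/
def IsAlphaAcyclic (F : HGraph) : Prop :=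
  ∃ (n : ℕ) (T : SimpleGraph (Fin n)) (f : Fin n → Finset ℕ),
    T.IsTree ∧ Function.Injective f ∧ (∀ i, f i ∈ F.edges) ∧
    (∀ e ∈ F.edges, ∃ i, f i = e) ∧
    ∀ i j b, OnPath T i j b → f i ∩ f j ⊆ f b

/-- The reachability hypergraph of the DAG `(V, Adj)`. -/
def reachHypergraph (V : Finset ℕ) (Adj : ℕ → ℕ → Prop) : HGraph :=
  ⟨V, (sourcesOf V Adj).image fun s => V.filter fun v => v ∈ Reach Adj s⟩

/-- The clique completion of a hypergraph. -/
def cliqueCompletion (H : HGraph) : SimpleGraph ℕ where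
  Adj u v := u ≠ v ∧ ∃ e ∈ H.edges, u ∈ e ∧ v ∈ e
  symm := by
    constructor
    intro u v h
    obtain ⟨huv, e, he, hu, hv⟩ := h
    exact ⟨huv.symm, e, he, hv, hu⟩
  loopless := by
    constructor
    intro u h
    exact h.1 rfl

/-- `G` has an induced cycle on `n` vertices. -/
def HasInducedCycle (G : SimpleGraph ℕ) (n : ℕ) : Prop :=
  ∃ f : ZMod n → ℕ, Function.Injective f ∧
    ∀ i j : ZMod n, G.Adj (f i) (f j) ↔ (j = i + 1 ∨ i = j + 1)

/-- The number of colorful homomorphisms from `H` to `G` under the coloring `c`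
(with color set `{1, …, |V(H)|}`). -/
def colHomCount (G H : HGraph) (c : ℕ → ℕ) : ℕ :=
  Set.ncard {f : ℕ → ℕ | IsHom H G f ∧ (∀ v ∉ H.verts, f v = 0) ∧
    Set.BijOn (fun v => c (f v)) ↑H.verts ↑(Finset.Icc 1 H.verts.card)}

/-- The tensor product of hypergraphs (vertex pairs encoded by `Nat.pair`). -/
def tensor (G H : HGraph) : HGraph :=
  ⟨(G.verts ×ˢ H.verts).image fun p => Nat.pair p.1 p.2,
    ((G.verts ×ˢ H.verts).image fun p => Nat.pair p.1 p.2).powerset.filter fun e =>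
      (e.image fun m => (Nat.unpair m).1) ∈ G.edges ∧
      (e.image fun m => (Nat.unpair m).2) ∈ H.edges⟩

/-- `Sub(G,H)`: the number of subhypergraphs of `G` isomorphic to `H`. -/
def subCount (G H : HGraph) : ℕ :=
  Set.ncard {p : Finset ℕ × Finset (Finset ℕ) |
    p.1 ⊆ G.verts ∧ (∀ e ∈ p.2, e ∈ G.edges ∧ e ⊆ p.1) ∧ Isomorphic H ⟨p.1, p.2⟩}

/-- Vertex renaming used in the construction of `G^H_l`:
core vertices go to the matching vertex of the colorful hyperedge `e` of `G`,
vertices of `H'` outside the core go to their fresh copy indexed by `e`, and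
vertices outside `H'` go to their unique copy. -/
def liftVert (S X : Finset ℕ) (π c : ℕ → ℕ) (e : Finset ℕ) (v : ℕ) : ℕ :=
  if v ∈ X then Nat.pair 0 ((e.filter fun u => c u = π v).sum id)
  else if v ∈ S then Nat.pair 2 (Nat.pair (Encodable.encode e) v)
  else Nat.pair 1 v

/-- The hypergraph `G^H_l` from the hardness construction. -/
def GHl (H G : HGraph) (S X : Finset ℕ) (Vp : ℕ → Finset ℕ) (π c : ℕ → ℕ)
    (k : ℕ) : HGraph :=
  ⟨(G.verts.image fun v => Nat.pair 0 v) ∪ ((H.verts \ S).image fun v => Nat.pair 1 v) ∪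
      (Finset.range k).biUnion fun i =>
        (G.edges.filter fun e => e.card = k - 1 ∧ e.image c = (Finset.range k).erase i).biUnion
          fun e => (Vp i).image fun v => Nat.pair 2 (Nat.pair (Encodable.encode e) v),
    ((H.edges.filter fun e => e ⊆ H.verts \ S).image fun e => e.image fun v => Nat.pair 1 v) ∪
      (Finset.range k).biUnion fun i =>
        (G.edges.filter fun e => e.card = k - 1 ∧ e.image c = (Finset.range k).erase i).biUnion
          fun e =>
            (H.edges.filter fun e' => ¬ e' ⊆ H.verts \ S ∧
                e' ⊆ X ∪ Vp i ∪ (H.verts \ S)).image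
              fun e' => e'.image (liftVert S X π c e)⟩

/-- The coloring of `G^H_l`. -/
def GHlColor (π c : ℕ → ℕ) (m : ℕ) : ℕ :=
  if (Nat.unpair m).1 = 0 then c (Nat.unpair m).2
  else if (Nat.unpair m).1 = 1 then π (Nat.unpair m).2
  else π (Nat.unpair (Nat.unpair m).2).2

/-- The grouping of the vertices of `G^H_l`: copied vertices first,
then the vertices of `G`, then the vertices of `V^ext`. -/
def GHlGroup (m : ℕ) : ℕ :=
  if (Nat.unpair m).1 = 2 then 0 else if (Nat.unpair m).1 = 0 then 1 else 2

lemma mem_drop_iff_le_indexOf {L : List ℕ} (h : L.Nodup) {w : ℕ} (hw : w ∈ L) (i : ℕ) :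
    w ∈ L.drop i ↔ i ≤ L.idxOf w := by
  constructor
  · intro hd
    obtain ⟨j, hj, hje⟩ := List.mem_drop_iff_getElem.1 hd
    have := List.Nodup.idxOf_getElem h (i + j) (by omega)
    rw [hje] at this
    omega
  · intro hle
    have hlt : L.idxOf w < L.length := List.idxOf_lt_length_iff.2 hw
    refine List.mem_drop_iff_getElem.2 ⟨L.idxOf w - i, by omega, ?_⟩
    have h2 : L[i + (L.idxOf w - i)]'(by omega) = L[L.idxOf w]'hlt := by
      congr 1; omega
    rw [h2]
    exact List.idxOf_get hlt

lemma peel (l : ℕ∞) (G : HGraph) (κ : ℕ)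
    (hκ : ∀ S ⊆ G.verts, S.Nonempty → ∃ v ∈ S, (G.trim S l).degree v ≤ κ) :
    ∀ (n : ℕ) (S : Finset ℕ), S.card = n → S ⊆ G.verts →
      ∃ L : List ℕ, L.Nodup ∧ L.toFinset = S ∧
        ∀ i (h : i < L.length), (G.trim ((L.drop i).toFinset) l).degree L[i] ≤ κ := by
  intro n
  induction n with
  | zero =>
    intro S hc _
    refine ⟨[], by simp, ?_, by simp⟩
    simp [Finset.card_eq_zero.1 hc]
  | succ n ih =>
    intro S hc hS
    have hne : S.Nonempty := by rw [← Finset.card_pos, hc]; omega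
    obtain ⟨v, hv, hdeg⟩ := hκ S hS hne
    obtain ⟨L, hnd, htf, hdg⟩ := ih (S.erase v)
      (by rw [Finset.card_erase_of_mem hv, hc]; rfl)
      ((Finset.erase_subset _ _).trans hS)
    have hvL : v ∉ L := by
      intro hvL
      have : v ∈ S.erase v := htf ▸ List.mem_toFinset.2 hvL
      simp at this
    refine ⟨v :: L, List.nodup_cons.2 ⟨hvL, hnd⟩, ?_, ?_⟩
    · simp [htf, Finset.insert_erase hv]
    · intro i h
      match i with
      | 0 =>
        simpa [htf, Finset.insert_erase hv] using hdeg
      | (j+1) =>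
        simpa using hdg j (by simpa using h)

theorem stmt0 (l : ℕ∞) (G : HGraph) (hG : G.Good) :
    ∃ π : ℕ → ℕ, Set.InjOn π ↑G.verts ∧
      ∀ v ∈ G.verts, loutdeg G π l v ≤ G.degeneracy l * G.rank := by
  set κ := G.degeneracy l with hκdef
  -- the defining set is nonempty
  have hmem : G.edges.card ∈ {κ : ℕ | ∀ S ⊆ G.verts, S.Nonempty →
      ∃ v ∈ S, (G.trim S l).degree v ≤ κ} := by
    intro S hS hne
    obtain ⟨v, hv⟩ := hne
    refine ⟨v, hv, ?_⟩
    calc (G.trim S l).degree v ≤ (G.trim S l).edges.card := Finset.card_filter_le _ _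
      _ ≤ (G.edges.filter fun e => ((e \ S).card : ℕ∞) ≤ l ∧ (e ∩ S).Nonempty).card :=
        Finset.card_image_le
      _ ≤ G.edges.card := Finset.card_filter_le _ _
  have hκ : ∀ S ⊆ G.verts, S.Nonempty → ∃ v ∈ S, (G.trim S l).degree v ≤ κ :=
    Nat.sInf_mem ⟨_, hmem⟩
  obtain ⟨L, hnd, htf, hdg⟩ := peel l G κ hκ G.verts.card G.verts rfl le_rfl
  refine ⟨fun v => L.idxOf v, ?_, ?_⟩
  · intro u hu v hv he
    have huL : u ∈ L := by rw [← List.mem_toFinset, htf]; exact hu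
    have hvL : v ∈ L := by rw [← List.mem_toFinset, htf]; exact hv
    have h1 := List.idxOf_get (List.idxOf_lt_length_iff.2 huL)
    have h2 := List.idxOf_get (List.idxOf_lt_length_iff.2 hvL)
    simp only [he] at h1
    rw [h1] at h2
    exact h2.symm ▸ rfl
  · intro u hu
    set π : ℕ → ℕ := fun v => L.idxOf v with hπ
    have huL : u ∈ L := by rw [← List.mem_toFinset, htf]; exact hu
    have hiu : L.idxOf u < L.length := List.idxOf_lt_length_iff.2 huL
    have hπval : ∀ w, π w = L.idxOf w := fun _ => rfl
    set i := L.idxOf u with hidef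
    set S := (L.drop i).toFinset with hSdef
    have hgetu : L[i] = u := List.idxOf_get hiu
    have hmemS : ∀ w ∈ G.verts, (w ∈ S ↔ i ≤ L.idxOf w) := by
      intro w hw
      rw [hSdef, List.mem_toFinset]
      exact mem_drop_iff_le_indexOf hnd (by rw [← List.mem_toFinset, htf]; exact hw) i
    set T := (G.trim S l).edges.filter fun e' => u ∈ e' with hT
    have hsub : (G.verts.filter fun v => SkelArc G π l u v) ⊆ T.biUnion id := by
      intro v hv
      rw [Finset.mem_filter] at hv
      obtain ⟨hvV, e, he, hue, hve, hlt, hcard⟩ := hv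
      have heV : e ⊆ G.verts := (hG e he).1
      have hdiff : e \ S = e.filter fun w => π w < π u := by
        ext w
        simp only [Finset.mem_sdiff, Finset.mem_filter]
        constructor
        · rintro ⟨hwe, hws⟩
          refine ⟨hwe, ?_⟩
          have := (hmemS w (heV hwe)).not.1 hws
          rw [hπval, hπval]
          omega
        · rintro ⟨hwe, hwlt⟩
          refine ⟨hwe, fun hws => ?_⟩
          have := (hmemS w (heV hwe)).1 hws
          rw [hπval, hπval] at hwlt
          omega
      have huS : u ∈ S := (hmemS u hu).2 le_rfl
      have hvS : v ∈ S := (hmemS v hvV).2 (le_of_lt hlt)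
      have he' : e ∩ S ∈ (G.trim S l).edges := by
        apply Finset.mem_image_of_mem
        rw [Finset.mem_filter]
        exact ⟨he, by rw [hdiff]; exact hcard, ⟨u, Finset.mem_inter.2 ⟨hue, huS⟩⟩⟩
      refine Finset.mem_biUnion.2 ⟨e ∩ S, ?_, ?_⟩
      · rw [hT, Finset.mem_filter]
        exact ⟨he', Finset.mem_inter.2 ⟨hue, huS⟩⟩
      · exact Finset.mem_inter.2 ⟨hve, hvS⟩
    have hrank : ∀ e' ∈ T, e'.card ≤ G.rank := by
      intro e' he'
      rw [hT, Finset.mem_filter] at he'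
      obtain ⟨he', _⟩ := he'
      obtain ⟨e, hef, rfl⟩ := Finset.mem_image.1 he'
      rw [Finset.mem_filter] at hef
      calc (e ∩ S).card ≤ e.card := Finset.card_le_card (Finset.inter_subset_left)
        _ ≤ G.rank := Finset.le_sup hef.1
    calc loutdeg G π l u ≤ (T.biUnion id).card := Finset.card_le_card hsub
      _ ≤ ∑ e' ∈ T, (id e').card := Finset.card_biUnion_le
      _ ≤ T.card * G.rank := Finset.sum_le_card_nsmul _ _ _ hrank
      _ ≤ κ * G.rank := by
        apply Nat.mul_le_mul_right
        have := hdg i hiu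
        rw [hgetu] at this
        exact this

end
end

section
/- Let l ∈ ℕ ∪ {∞} and let H be a hypergraph. For every hypergraph H′ in the contract set Q^c(H), the l-DAG-treewidth satisfies τ_l(H′) ≤ τ_l(H). -/
open scoped Classical

noncomputable section

namespace S2
variable (H : HGraph) (f π' : ℕ → ℕ) (l : ℕ∞)

/-- the block (fiber) of `w`. -/
def blkF (w : ℕ) : Finset ℕ := H.verts.filter fun v => f v = w

/-- entry vertices of the block of `w`. -/
def entF (w : ℕ) : Finset ℕ :=
  (blkF H f w).filter fun q => ∃ e ∈ H.edges, q ∈ e ∧ ∃ x ∈ e, π' (f x) < π' w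

/-- BFS layers from the entry set inside the block of `w`. -/
def stepF (w : ℕ) : ℕ → Finset ℕ
  | 0 => entF H f π' w
  | n+1 => stepF w n ∪ (blkF H f w).filter fun v =>
      ∃ u ∈ stepF w n, ∃ e ∈ H.edges, u ∈ e ∧ v ∈ e

def dF (v : ℕ) : ℕ := sInf {n | v ∈ stepF H f π' (f v) n}

def MB : ℕ := H.verts.sup id + 1

def keyF (v : ℕ) : ℕ := dF H f π' v * MB H + v

def rankF (v : ℕ) : ℕ :=
  ((blkF H f (f v)).filter fun u => keyF H f π' u < keyF H f π' v).card

def piF (v : ℕ) : ℕ := π' (f v) * (H.verts.card + 1) + rankF H f π' v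

lemma mem_blkF {v w : ℕ} : v ∈ blkF H f w ↔ v ∈ H.verts ∧ f v = w := Finset.mem_filter

lemma blkF_subset (w : ℕ) : blkF H f w ⊆ H.verts := Finset.filter_subset _ _

lemma lt_MB {v : ℕ} (hv : v ∈ H.verts) : v < MB H :=
  Nat.lt_succ_of_le (Finset.le_sup (f := id) hv)

lemma rankF_lt {v : ℕ} : rankF H f π' v < H.verts.card + 1 :=
  Nat.lt_succ_of_le (le_trans (Finset.card_filter_le _ _)
    (Finset.card_le_card (blkF_subset H f _)))

lemma lex_lt_of_lt {a b r r' N : ℕ} (h : a < b) (hr : r < N) : a*N + r < b*N + r' := by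
  have h1 : a*N + r < a*N + N := by omega
  have h2 : a*N + N = (a+1)*N := by ring
  have h3 : (a+1)*N ≤ b*N := Nat.mul_le_mul_right N h
  omega

lemma keyF_inj {u v : ℕ} (hu : u ∈ H.verts) (hv : v ∈ H.verts)
    (h : keyF H f π' u = keyF H f π' v) : u = v := by
  have hu' := lt_MB H hu
  have hv' := lt_MB H hv
  have h1 : (dF H f π' u * MB H + u) % MB H = (dF H f π' v * MB H + v) % MB H := by
    unfold keyF at h; rw [h]
  rw [Nat.mul_comm (dF H f π' u), Nat.mul_comm (dF H f π' v), Nat.mul_add_mod,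
    Nat.mul_add_mod, Nat.mod_eq_of_lt hu', Nat.mod_eq_of_lt hv'] at h1
  exact h1

lemma piF_lt_of_pi' {u v : ℕ} (h : π' (f u) < π' (f v)) : piF H f π' u < piF H f π' v :=
  lex_lt_of_lt h (rankF_lt H f π')

lemma rankF_lt_rankF {u v : ℕ} (hu : u ∈ H.verts) (hb : f u = f v)
    (hk : keyF H f π' u < keyF H f π' v) : rankF H f π' u < rankF H f π' v := by
  apply Finset.card_lt_card
  constructor
  · intro x hx
    rw [Finset.mem_filter] at hx ⊢
    rw [← hb]
    exact ⟨hx.1, lt_trans hx.2 hk⟩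
  · intro hsub
    have : u ∈ (blkF H f (f v)).filter fun x => keyF H f π' x < keyF H f π' v := by
      rw [Finset.mem_filter, mem_blkF]
      exact ⟨⟨hu, hb⟩, hk⟩
    have := hsub this
    rw [Finset.mem_filter] at this
    exact lt_irrefl _ this.2

lemma piF_lt_of_key {u v : ℕ} (hu : u ∈ H.verts) (hb : f u = f v)
    (hk : keyF H f π' u < keyF H f π' v) : piF H f π' u < piF H f π' v := by
  unfold piF
  rw [hb]
  exact Nat.add_lt_add_left (rankF_lt_rankF H f π' hu hb hk) _

lemma piF_injOn (hinj : Set.InjOn π' ↑(H.verts.image f)) :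
    Set.InjOn (piF H f π') ↑H.verts := by
  intro u hu v hv h
  by_contra hne
  by_cases hb : f u = f v
  · have hk : keyF H f π' u ≠ keyF H f π' v := fun hk => hne (keyF_inj H f π' hu hv hk)
    rcases lt_or_gt_of_ne hk with hk | hk
    · exact absurd h (ne_of_lt (piF_lt_of_key H f π' hu hb hk))
    · exact absurd h.symm (ne_of_lt (piF_lt_of_key H f π' hv hb.symm hk))
  · rcases Nat.lt_trichotomy (π' (f u)) (π' (f v)) with hlt | heq | hgt
    · exact absurd h (ne_of_lt (piF_lt_of_pi' H f π' hlt))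
    · exact hb (hinj (Finset.mem_coe.2 (Finset.mem_image_of_mem f hu))
        (Finset.mem_coe.2 (Finset.mem_image_of_mem f hv)) heq)
    · exact absurd h.symm (ne_of_lt (piF_lt_of_pi' H f π' hgt))

lemma pi'_lt_of_piF {u v : ℕ} (hinj : Set.InjOn π' ↑(H.verts.image f))
    (hu : u ∈ H.verts) (hv : v ∈ H.verts) (hne : f u ≠ f v)
    (h : piF H f π' u < piF H f π' v) : π' (f u) < π' (f v) := by
  rcases Nat.lt_trichotomy (π' (f u)) (π' (f v)) with hlt | heq | hgt
  · exact hlt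
  · exact absurd (hinj (Finset.mem_coe.2 (Finset.mem_image_of_mem f hu))
      (Finset.mem_coe.2 (Finset.mem_image_of_mem f hv)) heq) hne
  · exact absurd h (not_lt.2 (le_of_lt (piF_lt_of_pi' H f π' hgt)))

lemma piF_lt_of_pi'_mem {u v : ℕ} (h : π' (f u) < π' (f v)) :
    piF H f π' u < piF H f π' v := piF_lt_of_pi' H f π' h

/-- a vertex of `e` that is `piF`-minimal. -/
lemma exists_min_edge (hH : H.Good) {e : Finset ℕ} (he : e ∈ H.edges) :
    ∃ m ∈ e, ∀ x ∈ e, piF H f π' m ≤ piF H f π' x :=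
  Finset.exists_min_image e (piF H f π') (hH e he).2

/-- the minimum of an edge has arcs to all later vertices of the edge. -/
lemma skel_of_min {e : Finset ℕ} (he : e ∈ H.edges) {m v : ℕ} (hm : m ∈ e)
    (hmin : ∀ x ∈ e, piF H f π' m ≤ piF H f π' x) (hv : v ∈ e)
    (hlt : piF H f π' m < piF H f π' v) : SkelArc H (piF H f π') l m v := by
  refine ⟨e, he, hm, hv, hlt, ?_⟩
  have : e.filter (fun w => piF H f π' w < piF H f π' m) = ∅ :=
    Finset.filter_eq_empty_iff.2 (fun {x} hx => not_lt.2 (hmin x hx))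
  rw [this]
  simp

lemma piF_lt_of_le_ne (hinj : Set.InjOn π' ↑(H.verts.image f)) {m v : ℕ}
    (hm : m ∈ H.verts) (hv : v ∈ H.verts)
    (hle : piF H f π' m ≤ piF H f π' v) (hne : m ≠ v) :
    piF H f π' m < piF H f π' v :=
  lt_of_le_of_ne hle (fun h => hne (piF_injOn H f π' hinj hm hv h))

lemma min_image_le (hH : H.Good) (hinj : Set.InjOn π' ↑(H.verts.image f))
    {e : Finset ℕ} (he : e ∈ H.edges) {m : ℕ} (hm : m ∈ e)
    (hmin : ∀ x ∈ e, piF H f π' m ≤ piF H f π' x) :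
    ∀ y' ∈ e.image f, π' (f m) ≤ π' y' := by
  intro y' hy'
  obtain ⟨y, hy, rfl⟩ := Finset.mem_image.1 hy'
  by_cases hfy : f y = f m
  · rw [hfy]
  · have hmv := (hH e he).1 hm
    have hyv := (hH e he).1 hy
    exact le_of_lt (pi'_lt_of_piF H f π' hinj hmv hyv (Ne.symm hfy)
      (piF_lt_of_le_ne H f π' hinj hmv hyv (hmin y hy)
        (fun h => hfy (by rw [h]))))

lemma edge_image_mem {e : Finset ℕ} (he : e ∈ H.edges) :
    e.image f ∈ (quotientBy H f).edges := Finset.mem_image_of_mem _ he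

lemma edge_image_subset (hH : H.Good) {e : Finset ℕ} (he : e ∈ H.edges) :
    e.image f ⊆ (quotientBy H f).verts :=
  Finset.image_subset_image (hH e he).1

/-- the image of the minimum of an edge has arcs (in the quotient skeleton)
to all later vertices of the image edge. -/
lemma skel'_of_min (hH : H.Good) (hinj : Set.InjOn π' ↑(H.verts.image f))
    {e : Finset ℕ} (he : e ∈ H.edges) {m : ℕ} (hm : m ∈ e)
    (hmin : ∀ x ∈ e, piF H f π' m ≤ piF H f π' x) {y' : ℕ}
    (hy' : y' ∈ e.image f) (hne : f m ≠ y') :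
    SkelArc (quotientBy H f) π' l (f m) y' := by
  have hlt : π' (f m) < π' y' := by
    refine lt_of_le_of_ne (min_image_le H f π' hH hinj he hm hmin y' hy') ?_
    intro h
    exact hne (hinj (Finset.mem_coe.2 ((edge_image_subset H f hH he)
      (Finset.mem_image_of_mem f hm)))
      (Finset.mem_coe.2 ((edge_image_subset H f hH he) hy')) h)
  refine ⟨e.image f, edge_image_mem H f he, Finset.mem_image_of_mem f hm, hy', hlt, ?_⟩
  have : (e.image f).filter (fun w => π' w < π' (f m)) = ∅ :=
    Finset.filter_eq_empty_iff.2
      (fun {x} hx => not_lt.2 (min_image_le H f π' hH hinj he hm hmin x hx))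
  rw [this]
  simp

/-- arcs map to arcs across distinct blocks (F1). -/
lemma skel_image (hH : H.Good) (hinj : Set.InjOn π' ↑(H.verts.image f))
    {u v : ℕ} (h : SkelArc H (piF H f π') l u v) (hne : f u ≠ f v) :
    SkelArc (quotientBy H f) π' l (f u) (f v) := by
  obtain ⟨e, he, hu, hv, hlt, hcard⟩ := h
  have huv := (hH e he).1 hu
  have hvv := (hH e he).1 hv
  refine ⟨e.image f, edge_image_mem H f he, Finset.mem_image_of_mem f hu,
    Finset.mem_image_of_mem f hv, pi'_lt_of_piF H f π' hinj huv hvv hne hlt, ?_⟩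
  have hsurj : Set.SurjOn f ↑(e.filter fun w => piF H f π' w < piF H f π' u)
      ↑((e.image f).filter fun w' => π' w' < π' (f u)) := by
    intro y' hy'
    rw [Finset.mem_coe, Finset.mem_filter] at hy'
    obtain ⟨hy'e, hy'lt⟩ := hy'
    obtain ⟨y, hy, rfl⟩ := Finset.mem_image.1 hy'e
    have hfy : f y ≠ f u := fun h => by rw [h] at hy'lt; exact lt_irrefl _ hy'lt
    have : piF H f π' y < piF H f π' u := by
      rcases Nat.lt_trichotomy (piF H f π' y) (piF H f π' u) with h1 | h1 | h1
      · exact h1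
      · exact absurd (piF_injOn H f π' hinj ((hH e he).1 hy) huv h1)
          (fun h => hfy (by rw [h]))
      · exact absurd (pi'_lt_of_piF H f π' hinj huv ((hH e he).1 hy)
          (Ne.symm hfy) h1) (not_lt.2 (le_of_lt hy'lt))
    exact ⟨y, Finset.mem_coe.2 (Finset.mem_filter.2 ⟨hy, this⟩), rfl⟩
  calc (((e.image f).filter fun w' => π' w' < π' (f u)).card : ℕ∞)
      ≤ ((e.filter fun w => piF H f π' w < piF H f π' u).card : ℕ∞) :=
        Nat.cast_le.2 (Finset.card_le_card_of_surjOn f hsurj)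
    _ ≤ l := hcard

/-- reachability maps to the quotient (R1). -/
lemma rtg_image (hH : H.Good) (hinj : Set.InjOn π' ↑(H.verts.image f)) {u v : ℕ}
    (h : Relation.ReflTransGen (SkelArc H (piF H f π') l) u v) :
    Relation.ReflTransGen (SkelArc (quotientBy H f) π' l) (f u) (f v) := by
  induction h with
  | refl => exact Relation.ReflTransGen.refl
  | tail _ step ih =>
    rename_i b c _
    by_cases hbc : f b = f c
    · rwa [← hbc]
    · exact ih.tail (skel_image H f π' l hH hinj step hbc)

lemma stepF_subset_blk (w : ℕ) : ∀ n, stepF H f π' w n ⊆ blkF H f w := by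
  intro n
  induction n with
  | zero => exact Finset.filter_subset _ _
  | succ n ih =>
    intro v hv
    rcases Finset.mem_union.1 hv with h | h
    · exact ih h
    · exact Finset.mem_of_mem_filter v h

lemma reach_stepF (hcm : ContractMap H f) {w v : ℕ}
    (hent : (entF H f π' w).Nonempty) (hv : v ∈ blkF H f w) :
    ∃ n, v ∈ stepF H f π' w n := by
  obtain ⟨r, hr⟩ := hent
  have hrblk : r ∈ blkF H f w := Finset.mem_of_mem_filter r hr
  have htrim := hcm w
  have hmem : ∀ x ∈ blkF H f w,
      x ∈ (H.trim (H.verts.filter fun u => f u = w) ⊤).verts := by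
    intro x hx
    exact Finset.mem_inter.2 ⟨(blkF_subset H f w) hx, hx⟩
  have hpath := htrim r (hmem r hrblk) v (hmem v hv)
  have key : ∀ x y, Relation.ReflTransGen
      (H.trim (H.verts.filter fun u => f u = w) ⊤).Adj x y →
      (∃ n, x ∈ stepF H f π' w n) → ∃ n, y ∈ stepF H f π' w n := by
    intro x y hxy
    induction hxy with
    | refl => exact id
    | tail _ step ih =>
      rename_i b c _
      intro hx
      obtain ⟨n, hb⟩ := ih hx
      obtain ⟨e2, he2, hbe2, hce2⟩ := step
      obtain ⟨e, hef, rfl⟩ := Finset.mem_image.1 he2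
      have he : e ∈ H.edges := Finset.mem_of_mem_filter e hef
      have hbc : c ∈ blkF H f w := (Finset.mem_inter.1 hce2).2
      refine ⟨n+1, Finset.mem_union.2 (Or.inr (Finset.mem_filter.2 ⟨hbc, ?_⟩))⟩
      exact ⟨b, hb, e, he, (Finset.mem_inter.1 hbe2).1, (Finset.mem_inter.1 hce2).1⟩
  exact key r v hpath ⟨0, hr⟩

/-- if the block of `v` has an entry, then `v` has an in-arc. -/
lemma exists_in_arc (hH : H.Good) (hcm : ContractMap H f)
    (hinj : Set.InjOn π' ↑(H.verts.image f)) {v : ℕ} (hv : v ∈ H.verts)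
    (hent : (entF H f π' (f v)).Nonempty) :
    ∃ u ∈ H.verts, SkelArc H (piF H f π') l u v := by
  by_cases hve : v ∈ entF H f π' (f v)
  · obtain ⟨-, e, he, hve', x, hxe, hx⟩ := Finset.mem_filter.1 hve
    have hxv : x ∈ H.verts := (hH e he).1 hxe
    have hxlt : piF H f π' x < piF H f π' v := piF_lt_of_pi' H f π' hx
    obtain ⟨m, hme, hmin⟩ := exists_min_edge H f π' hH he
    have hmlt : piF H f π' m < piF H f π' v := lt_of_le_of_lt (hmin x hxe) hxlt
    exact ⟨m, (hH e he).1 hme, skel_of_min H f π' l he hme hmin hve' hmlt⟩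
  · have hvblk : v ∈ blkF H f (f v) := (mem_blkF H f).2 ⟨hv, rfl⟩
    have hex : ∃ n, v ∈ stepF H f π' (f v) n := reach_stepF H f π' hcm hent hvblk
    have hmemd : v ∈ stepF H f π' (f v) (dF H f π' v) := Nat.sInf_mem hex
    rcases Nat.eq_zero_or_pos (dF H f π' v) with h0 | hpos
    · rw [h0] at hmemd; exact absurd hmemd hve
    · obtain ⟨k, hk⟩ := Nat.exists_eq_succ_of_ne_zero (Nat.pos_iff_ne_zero.1 hpos)
      rw [hk] at hmemd
      rcases Finset.mem_union.1 hmemd with h | h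
      · have : dF H f π' v ≤ k := Nat.sInf_le h
        omega
      · obtain ⟨-, u, hu, e, he, hue, hvee⟩ := Finset.mem_filter.1 h
        have hublk : u ∈ blkF H f (f v) := stepF_subset_blk H f π' (f v) k hu
        have hufv : f u = f v := ((mem_blkF H f).1 hublk).2
        have huV : u ∈ H.verts := ((mem_blkF H f).1 hublk).1
        have hdu : dF H f π' u ≤ k := by
          unfold dF; rw [hufv]; exact Nat.sInf_le hu
        have hdlt : dF H f π' u < dF H f π' v := by omega
        have hkey : keyF H f π' u < keyF H f π' v :=
          lex_lt_of_lt hdlt (lt_MB H huV)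
        have hpi : piF H f π' u < piF H f π' v :=
          piF_lt_of_key H f π' huV hufv hkey
        obtain ⟨m, hme, hmin⟩ := exists_min_edge H f π' hH he
        have hmlt : piF H f π' m < piF H f π' v := lt_of_le_of_lt (hmin u hue) hpi
        exact ⟨m, (hH e he).1 hme, skel_of_min H f π' l he hme hmin hvee hmlt⟩

/-- (D): sources map to sources of the quotient skeleton. -/
lemma image_source (hH : H.Good) (hcm : ContractMap H f)
    (hinj : Set.InjOn π' ↑(H.verts.image f)) {s : ℕ}
    (hs : s ∈ sourcesOf H.verts (SkelArc H (piF H f π') l)) :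
    f s ∈ sourcesOf (quotientBy H f).verts (SkelArc (quotientBy H f) π' l) := by
  obtain ⟨hsV, hnos⟩ := Finset.mem_filter.1 hs
  refine Finset.mem_filter.2 ⟨Finset.mem_image_of_mem f hsV, ?_⟩
  rintro ⟨y', hy'V, harc⟩
  obtain ⟨e', he', hy'e, hfse, hlt', -⟩ := harc
  obtain ⟨e, he, rfl⟩ := Finset.mem_image.1 he'
  obtain ⟨p, hpe, hpfs⟩ := Finset.mem_image.1 hfse
  obtain ⟨x0, hx0e, rfl⟩ := Finset.mem_image.1 hy'e
  have hent : (entF H f π' (f s)).Nonempty := by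
    refine ⟨p, Finset.mem_filter.2 ⟨(mem_blkF H f).2 ⟨(hH e he).1 hpe, hpfs⟩,
      e, he, hpe, x0, hx0e, ?_⟩⟩
    exact hlt'
  obtain ⟨u, huV, harc'⟩ := exists_in_arc H f π' l hH hcm hinj hsV hent
  exact hnos ⟨u, huV, harc'⟩

/-- (E): every source of the quotient skeleton has a source preimage. -/
lemma exists_source_preimage (hH : H.Good)
    (hinj : Set.InjOn π' ↑(H.verts.image f)) {s' : ℕ}
    (hs' : s' ∈ sourcesOf (quotientBy H f).verts (SkelArc (quotientBy H f) π' l)) :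
    ∃ s ∈ sourcesOf H.verts (SkelArc H (piF H f π') l), f s = s' := by
  obtain ⟨hs'V, hnos⟩ := Finset.mem_filter.1 hs'
  obtain ⟨v0, hv0, hfv0⟩ := Finset.mem_image.1 hs'V
  have hbne : (blkF H f s').Nonempty := ⟨v0, (mem_blkF H f).2 ⟨hv0, hfv0⟩⟩
  obtain ⟨p1, hp1, hp1min⟩ := Finset.exists_min_image (blkF H f s') (piF H f π') hbne
  obtain ⟨hp1V, hp1f⟩ := (mem_blkF H f).1 hp1
  refine ⟨p1, Finset.mem_filter.2 ⟨hp1V, ?_⟩, hp1f⟩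
  rintro ⟨u, huV, harc⟩
  obtain ⟨e, he, hue, hp1e, hlt, -⟩ := harc
  obtain ⟨m, hme, hmin⟩ := exists_min_edge H f π' hH he
  have hmV : m ∈ H.verts := (hH e he).1 hme
  have hmlt : piF H f π' m < piF H f π' p1 := lt_of_le_of_lt (hmin u hue) hlt
  by_cases hfm : f m = s'
  · have : p1 ≠ m := fun h => by rw [h] at hmlt; exact lt_irrefl _ hmlt
    have hmblk : m ∈ blkF H f s' := (mem_blkF H f).2 ⟨hmV, hfm⟩
    exact absurd hmlt (not_lt.2 (hp1min m hmblk))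
  · have harc' : SkelArc (quotientBy H f) π' l (f m) s' := by
      have : s' ∈ e.image f := by
        rw [← hp1f]; exact Finset.mem_image_of_mem f hp1e
      exact skel'_of_min H f π' l hH hinj he hme hmin this hfm
    exact hnos ⟨f m, Finset.mem_image_of_mem f hmV, harc'⟩

/-- every vertex is reachable from a source. -/
lemma exists_source_rtg (hH : H.Good) : ∀ n v, v ∈ H.verts → piF H f π' v < n →
    ∃ s ∈ sourcesOf H.verts (SkelArc H (piF H f π') l),
      Relation.ReflTransGen (SkelArc H (piF H f π') l) s v := by
  intro n
  induction n with
  | zero => intro v _ h; omega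
  | succ n ih =>
    intro v hv hlt
    by_cases hsrc : v ∈ sourcesOf H.verts (SkelArc H (piF H f π') l)
    · exact ⟨v, hsrc, Relation.ReflTransGen.refl⟩
    · have : ∃ u ∈ H.verts, SkelArc H (piF H f π') l u v := by
        by_contra hno
        exact hsrc (Finset.mem_filter.2 ⟨hv, hno⟩)
      obtain ⟨u, huV, harc⟩ := this
      have hulpi : piF H f π' u < piF H f π' v := by
        obtain ⟨e, he, hue, hve, hlt2, -⟩ := harc
        exact hlt2
      obtain ⟨s, hs, hrtg⟩ := ih u huV (by omega)
      exact ⟨s, hs, hrtg.tail harc⟩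

lemma anc (hH : H.Good) {v : ℕ} (hv : v ∈ H.verts) :
    ∃ s ∈ sourcesOf H.verts (SkelArc H (piF H f π') l),
      Relation.ReflTransGen (SkelArc H (piF H f π') l) s v :=
  exists_source_rtg H f π' l hH (piF H f π' v + 1) v hv (Nat.lt_succ_self _)

/-- the chain-link relation used to transfer DAG-tree decompositions. -/
def LkF (u' a b : ℕ) : Prop :=
  a ∈ sourcesOf H.verts (SkelArc H (piF H f π') l) ∧
  b ∈ sourcesOf H.verts (SkelArc H (piF H f π') l) ∧
  ∃ z, Relation.ReflTransGen (SkelArc H (piF H f π') l) a z ∧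
    Relation.ReflTransGen (SkelArc H (piF H f π') l) b z ∧
    Relation.ReflTransGen (SkelArc (quotientBy H f) π' l) (f z) u'

lemma lkF_symm {u' a b : ℕ} (h : LkF H f π' l u' a b) : LkF H f π' l u' b a := by
  obtain ⟨ha, hb, z, h1, h2, h3⟩ := h
  exact ⟨hb, ha, z, h2, h1, h3⟩

lemma rtg_symm {r : ℕ → ℕ → Prop} (hr : ∀ a b, r a b → r b a) {a b : ℕ}
    (h : Relation.ReflTransGen r a b) : Relation.ReflTransGen r b a := by
  induction h with
  | refl => exact Relation.ReflTransGen.refl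
  | tail _ step ih => exact Relation.ReflTransGen.head (hr _ _ step) ih

lemma rtg_trans_single {r : ℕ → ℕ → Prop} {a b c : ℕ}
    (h : Relation.ReflTransGen r a b) (h2 : b = c ∨ r b c) :
    Relation.ReflTransGen r a c := by
  rcases h2 with rfl | h2
  · exact h
  · exact h.tail h2

/-- walking through one block: transfers anchors across a connected block. -/
lemma blockChain (hH : H.Good) (hinj : Set.InjOn π' ↑(H.verts.image f)) (u' : ℕ) :
    ∀ {p q : ℕ}, Relation.ReflTransGen
      (H.trim (H.verts.filter fun v => f v = u') ⊤).Adj p q →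
    ∀ {a : ℕ}, a ∈ sourcesOf H.verts (SkelArc H (piF H f π') l) →
      Relation.ReflTransGen (SkelArc H (piF H f π') l) a p → f p = u' →
    ∀ {b : ℕ}, b ∈ sourcesOf H.verts (SkelArc H (piF H f π') l) →
      Relation.ReflTransGen (SkelArc H (piF H f π') l) b q →
      Relation.ReflTransGen (LkF H f π' l u') a b := by
  intro p q hpq
  induction hpq with
  | refl =>
    intro a ha hap hpf b hb hbp
    refine Relation.ReflTransGen.single ⟨ha, hb, p, hap, hbp, ?_⟩
    rw [hpf]
  | tail _ step ih =>
    rename_i c q _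
    intro a ha hap hpf b hb hbq
    obtain ⟨e2, he2, hce2, hqe2⟩ := step
    obtain ⟨e, hef, rfl⟩ := Finset.mem_image.1 he2
    have he : e ∈ H.edges := Finset.mem_of_mem_filter e hef
    have hcblk := (Finset.mem_inter.1 hce2).2
    have hqblk := (Finset.mem_inter.1 hqe2).2
    have hce : c ∈ e := (Finset.mem_inter.1 hce2).1
    have hqe : q ∈ e := (Finset.mem_inter.1 hqe2).1
    have hcf : f c = u' := (Finset.mem_filter.1 hcblk).2
    have hqf : f q = u' := (Finset.mem_filter.1 hqblk).2
    have hcV : c ∈ H.verts := (Finset.mem_filter.1 hcblk).1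
    have hqV : q ∈ H.verts := (Finset.mem_filter.1 hqblk).1
    obtain ⟨m, hme, hmin⟩ := exists_min_edge H f π' hH he
    have hmV : m ∈ H.verts := (hH e he).1 hme
    obtain ⟨r, hr, hrm⟩ := anc H f π' l hH hmV
    have hrc : Relation.ReflTransGen (SkelArc H (piF H f π') l) r c := by
      refine rtg_trans_single hrm ?_
      by_cases hmc : m = c
      · exact Or.inl hmc
      · exact Or.inr (skel_of_min H f π' l he hme hmin hce
          (piF_lt_of_le_ne H f π' hinj hmV hcV (hmin c hce) hmc))
    have hrq : Relation.ReflTransGen (SkelArc H (piF H f π') l) r q := by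
      refine rtg_trans_single hrm ?_
      by_cases hmq : m = q
      · exact Or.inl hmq
      · exact Or.inr (skel_of_min H f π' l he hme hmin hqe
          (piF_lt_of_le_ne H f π' hinj hmV hqV (hmin q hqe) hmq))
    have hchain_ar : Relation.ReflTransGen (LkF H f π' l u') a r :=
      ih ha hap hpf hr hrc
    refine hchain_ar.tail ⟨hr, hb, q, hrq, hbq, ?_⟩
    rw [hqf]

lemma rtg_skel'_mem (hH : H.Good) {x y : ℕ}
    (h : Relation.ReflTransGen (SkelArc (quotientBy H f) π' l) x y)
    (hx : x ∈ (quotientBy H f).verts) : y ∈ (quotientBy H f).verts := by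
  induction h with
  | refl => exact hx
  | tail _ step ih =>
    obtain ⟨e', he', -, hye', -, -⟩ := step
    obtain ⟨e, he, rfl⟩ := Finset.mem_image.1 he'
    exact (edge_image_subset H f hH he) hye'

/-- the chain lemma: any two sources whose images reach `u'` in the quotient
skeleton are linked by a chain. -/
lemma chain_main (hH : H.Good) (hcm : ContractMap H f)
    (hinj : Set.InjOn π' ↑(H.verts.image f)) :
    ∀ n u', u' ∈ (quotientBy H f).verts → π' u' < n →
    ∀ s t, s ∈ sourcesOf H.verts (SkelArc H (piF H f π') l) →
      t ∈ sourcesOf H.verts (SkelArc H (piF H f π') l) →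
      Relation.ReflTransGen (SkelArc (quotientBy H f) π' l) (f s) u' →
      Relation.ReflTransGen (SkelArc (quotientBy H f) π' l) (f t) u' →
      Relation.ReflTransGen (LkF H f π' l u') s t := by
  intro n
  induction n with
  | zero => intro u' _ h; omega
  | succ n ih =>
    intro u' hu'V hu'lt s t hs ht hps hpt
    have anchor : ∀ s0, s0 ∈ sourcesOf H.verts (SkelArc H (piF H f π') l) →
        Relation.ReflTransGen (SkelArc (quotientBy H f) π' l) (f s0) u' →
        ∃ a p, a ∈ sourcesOf H.verts (SkelArc H (piF H f π') l) ∧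
          Relation.ReflTransGen (LkF H f π' l u') s0 a ∧
          p ∈ H.verts ∧ f p = u' ∧
          Relation.ReflTransGen (SkelArc H (piF H f π') l) a p := by
      intro s0 hs0 hpath
      rcases hpath.cases_tail with heq | ⟨x', hx'path, harc⟩
      · exact ⟨s0, s0, hs0, Relation.ReflTransGen.refl,
          (Finset.mem_filter.1 hs0).1, heq.symm, Relation.ReflTransGen.refl⟩
      · obtain ⟨e', he', hx'e, hu'e, hlt', hcard'⟩ := harc
        obtain ⟨e, he, rfl⟩ := Finset.mem_image.1 he'
        obtain ⟨p, hpe, hpf⟩ := Finset.mem_image.1 hu'e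
        obtain ⟨m, hme, hmin⟩ := exists_min_edge H f π' hH he
        have hmV : m ∈ H.verts := (hH e he).1 hme
        have hpV : p ∈ H.verts := (hH e he).1 hpe
        obtain ⟨r, hr, hrm⟩ := anc H f π' l hH hmV
        have hrp : Relation.ReflTransGen (SkelArc H (piF H f π') l) r p := by
          refine rtg_trans_single hrm ?_
          by_cases hmp : m = p
          · exact Or.inl hmp
          · exact Or.inr (skel_of_min H f π' l he hme hmin hpe
              (piF_lt_of_le_ne H f π' hinj hmV hpV (hmin p hpe) hmp))
        have hrx' : Relation.ReflTransGen (SkelArc (quotientBy H f) π' l) (f r) x' := by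
          refine rtg_trans_single (rtg_image H f π' l hH hinj hrm) ?_
          by_cases hfm : f m = x'
          · exact Or.inl hfm
          · exact Or.inr (skel'_of_min H f π' l hH hinj he hme hmin hx'e hfm)
        have hx'V : x' ∈ (quotientBy H f).verts :=
          (edge_image_subset H f hH he) hx'e
        have hx'lt : π' x' < n := by
          have h1 : π' x' < π' u' := hlt'
          omega
        have hchain := ih x' hx'V hx'lt s0 r hs0 hr hx'path hrx'
        have hweak : Relation.ReflTransGen (LkF H f π' l u') s0 r := by
          refine Relation.ReflTransGen.mono ?_ _ _ hchain
          rintro a b ⟨ha, hb, z, h1, h2, h3⟩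
          exact ⟨ha, hb, z, h1, h2, h3.tail
            ⟨e.image f, edge_image_mem H f he, hx'e, hu'e, hlt', hcard'⟩⟩
        exact ⟨r, p, hr, hweak, hpV, hpf, hrp⟩
    obtain ⟨a, p, ha, hchs, hpV, hpf, hap⟩ := anchor s hs hps
    obtain ⟨b, q, hb, hcht, hqV, hqf, hbq⟩ := anchor t ht hpt
    have hmem : ∀ x, x ∈ H.verts → f x = u' →
        x ∈ (H.trim (H.verts.filter fun v => f v = u') ⊤).verts := by
      intro x hx hxf
      exact Finset.mem_inter.2 ⟨hx, Finset.mem_filter.2 ⟨hx, hxf⟩⟩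
    have hconn := hcm u' p (hmem p hpV hpf) q (hmem q hqV hqf)
    have hmid := blockChain H f π' l hH hinj u' hconn ha hap hpf hb hbq
    exact hchs.trans (hmid.trans (rtg_symm (fun _ _ => lkF_symm H f π' l) hcht))

/-- transfer of a DAG-tree decomposition to the quotient. -/
lemma transfer (hH : H.Good) (hcm : ContractMap H f)
    (hinj : Set.InjOn π' ↑(H.verts.image f)) {n : ℕ} {T : SimpleGraph (Fin n)}
    {β : Fin n → Finset ℕ}
    (hD : IsDTD H.verts (SkelArc H (piF H f π') l) T β) :
    IsDTD (quotientBy H f).verts (SkelArc (quotientBy H f) π' l) T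
      (fun i => (β i).image f) := by
  obtain ⟨hTree, hsub, hcov, hsep⟩ := hD
  refine ⟨hTree, ?_, ?_, ?_⟩
  · intro i s' hs'
    obtain ⟨s, hsβ, rfl⟩ := Finset.mem_image.1 hs'
    exact image_source H f π' l hH hcm hinj (hsub i hsβ)
  · intro s' hs'
    obtain ⟨s, hsrc, rfl⟩ := exists_source_preimage H f π' l hH hinj hs'
    obtain ⟨i, hi⟩ := hcov s hsrc
    exact ⟨i, Finset.mem_image_of_mem f hi⟩
  · intro i j b hOn u' hu'
    obtain ⟨hui, huj⟩ := hu'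
    obtain ⟨s1', hs1'B, hp1⟩ := hui
    obtain ⟨s2', hs2'B, hp2⟩ := huj
    obtain ⟨s1, hs1βi, rfl⟩ := Finset.mem_image.1 (Finset.mem_coe.1 hs1'B)
    obtain ⟨s2, hs2βj, rfl⟩ := Finset.mem_image.1 (Finset.mem_coe.1 hs2'B)
    have hs1 := hsub i hs1βi
    have hs2 := hsub j hs2βj
    have hs1V : s1 ∈ H.verts := (Finset.mem_filter.1 hs1).1
    have hu'V : u' ∈ (quotientBy H f).verts :=
      rtg_skel'_mem H f π' l hH hp1 (Finset.mem_image_of_mem f hs1V)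
    have hch := chain_main H f π' l hH hcm hinj (π' u' + 1) u' hu'V
      (Nat.lt_succ_self _) s1 s2 hs1 hs2 hp1 hp2
    -- NodeOK
    have W1 : ∀ t, Relation.ReflTransGen (LkF H f π' l u') s1 t →
        ∃ (nt : Fin n), t ∈ β nt ∧ ∃ w : T.Walk i nt, ∀ c ∈ w.support,
          ∃ s0 ∈ β c, Relation.ReflTransGen (SkelArc (quotientBy H f) π' l) (f s0) u' := by
      intro t hcht
      induction hcht with
      | refl =>
        refine ⟨i, hs1βi, SimpleGraph.Walk.nil, ?_⟩
        intro c hc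
        rw [SimpleGraph.Walk.support_nil, List.mem_singleton] at hc
        subst hc
        exact ⟨s1, hs1βi, hp1⟩
      | tail _ hlk ih =>
        rename_i c t _
        obtain ⟨nt, hcβ, w, hwOK⟩ := ih
        obtain ⟨hcsrc, htsrc, z, hcz, htz, hzu'⟩ := hlk
        obtain ⟨nt', ht'⟩ := hcov t htsrc
        obtain ⟨w2⟩ := hTree.isConnected.preconnected nt nt'
        have hq : ∀ cc ∈ (w2.toPath : T.Walk nt nt').support,
            ∃ s0 ∈ β cc, Relation.ReflTransGen (SkelArc (quotientBy H f) π' l) (f s0) u' := by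
          intro cc hcc
          have hOnc : OnPath T nt nt' cc := ⟨w2.toPath, w2.toPath.2, hcc⟩
          have hz2 : z ∈ ReachSet (SkelArc H (piF H f π') l) ↑(β nt) ∩
              ReachSet (SkelArc H (piF H f π') l) ↑(β nt') :=
            ⟨⟨c, Finset.mem_coe.2 hcβ, hcz⟩, ⟨t, Finset.mem_coe.2 ht', htz⟩⟩
          obtain ⟨s0, hs0, hs0z⟩ := hsep nt nt' cc hOnc hz2
          exact ⟨s0, Finset.mem_coe.1 hs0,
            (rtg_image H f π' l hH hinj hs0z).trans hzu'⟩
        refine ⟨nt', ht', w.append w2.toPath.1, ?_⟩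
        intro cc hcc
        rw [SimpleGraph.Walk.support_append] at hcc
        rcases List.mem_append.1 hcc with h | h
        · exact hwOK cc h
        · exact hq cc (List.tail_subset _ h)
    obtain ⟨nr, hs2nr, w, hwOK⟩ := W1 s2 hch
    obtain ⟨w3⟩ := hTree.isConnected.preconnected nr j
    have hq3 : ∀ cc ∈ (w3.toPath : T.Walk nr j).support,
        ∃ s0 ∈ β cc, Relation.ReflTransGen (SkelArc (quotientBy H f) π' l) (f s0) u' := by
      intro cc hcc
      have hOnc : OnPath T nr j cc := ⟨w3.toPath, w3.toPath.2, hcc⟩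
      have hz2 : s2 ∈ ReachSet (SkelArc H (piF H f π') l) ↑(β nr) ∩
          ReachSet (SkelArc H (piF H f π') l) ↑(β j) :=
        ⟨⟨s2, Finset.mem_coe.2 hs2nr, Relation.ReflTransGen.refl⟩,
         ⟨s2, Finset.mem_coe.2 hs2βj, Relation.ReflTransGen.refl⟩⟩
      obtain ⟨s0, hs0, hs0z⟩ := hsep nr j cc hOnc hz2
      exact ⟨s0, Finset.mem_coe.1 hs0,
        (rtg_image H f π' l hH hinj hs0z).trans hp2⟩
    set W : T.Walk i j := w.append w3.toPath.1 with hW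
    have hWOK : ∀ cc ∈ W.support,
        ∃ s0 ∈ β cc, Relation.ReflTransGen (SkelArc (quotientBy H f) π' l) (f s0) u' := by
      intro cc hcc
      rw [hW, SimpleGraph.Walk.support_append] at hcc
      rcases List.mem_append.1 hcc with h | h
      · exact hwOK cc h
      · exact hq3 cc (List.tail_subset _ h)
    obtain ⟨pb, hpbPath, hbmem⟩ := hOn
    have hpath_eq : (⟨pb, hpbPath⟩ : T.Path i j) = W.toPath :=
      hTree.IsAcyclic.path_unique _ _
    have hbW : b ∈ W.support := by
      have : b ∈ (W.toPath : T.Walk i j).support := by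
        rw [← hpath_eq]
        exact hbmem
      exact SimpleGraph.Walk.support_toPath_subset W this
    obtain ⟨s0, hs0βb, hs0u'⟩ := hWOK b hbW
    exact ⟨f s0, Finset.mem_coe.2 (Finset.mem_image_of_mem f hs0βb), hs0u'⟩

end S2

namespace S2

lemma trivialDTD (V : Finset ℕ) (Adj : ℕ → ℕ → Prop) :
    IsDTD V Adj (⊥ : SimpleGraph (Fin 1)) (fun _ => sourcesOf V Adj) := by
  refine ⟨⟨SimpleGraph.Connected.mk (fun v w => by
      rw [Subsingleton.elim v w]), SimpleGraph.isAcyclic_bot⟩, ?_, ?_, ?_⟩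
  · intro i
    exact Finset.Subset.refl _
  · intro s hs
    exact ⟨0, hs⟩
  · intro i j b _
    exact Set.inter_subset_left

lemma dagTreewidth_set_nonempty (V : Finset ℕ) (Adj : ℕ → ℕ → Prop) :
    {w : ℕ | ∃ (n : ℕ) (T : SimpleGraph (Fin n)) (β : Fin n → Finset ℕ),
      IsDTD V Adj T β ∧ ∀ i, (β i).card ≤ w}.Nonempty :=
  ⟨(sourcesOf V Adj).card, 1, ⊥, fun _ => sourcesOf V Adj,
    trivialDTD V Adj, fun _ => le_rfl⟩

lemma dagTreewidth_le_card (V : Finset ℕ) (Adj : ℕ → ℕ → Prop) :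
    dagTreewidth V Adj ≤ V.card := by
  apply Nat.sInf_le
  refine ⟨1, ⊥, fun _ => sourcesOf V Adj, trivialDTD V Adj, fun _ => ?_⟩
  exact Finset.card_le_card (Finset.filter_subset _ _)

variable (H : HGraph) (f π' : ℕ → ℕ) (l : ℕ∞)

lemma dtw_le (hH : H.Good) (hcm : ContractMap H f)
    (hinj : Set.InjOn π' ↑(H.verts.image f)) :
    dagTreewidth (quotientBy H f).verts (SkelArc (quotientBy H f) π' l) ≤
      dagTreewidth H.verts (SkelArc H (piF H f π') l) := by
  obtain ⟨n, T, β, hD, hw⟩ := Nat.sInf_mem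
    (dagTreewidth_set_nonempty H.verts (SkelArc H (piF H f π') l))
  apply Nat.sInf_le
  refine ⟨n, T, fun i => (β i).image f, transfer H f π' l hH hcm hinj hD, fun i => ?_⟩
  exact le_trans (Finset.card_image_le) (hw i)

end S2

theorem stmt2 (l : ℕ∞) (H H' : HGraph) (hH : H.Good)
    (hq : IsContractQuotient H H') : ldtw H' l ≤ ldtw H l := by
  obtain ⟨f, hcm, rfl⟩ := hq
  apply csSup_le
  · exact ⟨ldtwOriented (quotientBy H f) id l, id, Set.injOn_id _, rfl⟩
  · rintro w ⟨π', hπ', rfl⟩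
    have hinj : Set.InjOn π' ↑(H.verts.image f) := hπ'
    have h1 : ldtwOriented (quotientBy H f) π' l ≤
        ldtwOriented H (S2.piF H f π') l :=
      S2.dtw_le H f π' l hH hcm hinj
    refine le_trans h1 (le_csSup ?_ ?_)
    · refine ⟨H.verts.card, ?_⟩
      rintro x ⟨π0, -, rfl⟩
      exact S2.dagTreewidth_le_card H.verts (SkelArc H π0 l)
    · exact ⟨S2.piF H f π', S2.piF_injOn H f π' hinj, rfl⟩

end
end

section
/- A directed acyclic graph H⃗ has DAG-treewidth τ(H⃗) = 1 if and only if the reachability hypergraph of H⃗ is α-acyclic. -/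
open scoped Classical

noncomputable section

section Stmt10Aux

open SimpleGraph

variable {V : Finset ℕ} {Adj : ℕ → ℕ → Prop}

private lemma reach_mem' (hAdjV : ∀ u v, Adj u v → u ∈ V ∧ v ∈ V) {s x : ℕ} (hs : s ∈ V)
    (h : Relation.ReflTransGen Adj s x) : x ∈ V := by
  induction h with
  | refl => exact hs
  | tail _ h2 _ => exact (hAdjV _ _ h2).2

private lemma source_mem' {s : ℕ} (hs : s ∈ sourcesOf V Adj) : s ∈ V :=
  (Finset.mem_filter.mp hs).1

private lemma sources_nonempty' (hV : V.Nonempty) (hAdjV : ∀ u v, Adj u v → u ∈ V ∧ v ∈ V)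
    (hacyc : ∀ v, ¬ Relation.TransGen Adj v v) : (sourcesOf V Adj).Nonempty := by
  obtain ⟨v, hv, hmin⟩ := V.exists_min_image
    (fun v => (V.filter fun u => Relation.ReflTransGen Adj u v).card) hV
  refine ⟨v, Finset.mem_filter.mpr ⟨hv, ?_⟩⟩
  rintro ⟨u, hu, hadj⟩
  have hss : (V.filter fun w => Relation.ReflTransGen Adj w u) ⊂
      V.filter fun w => Relation.ReflTransGen Adj w v := by
    rw [Finset.ssubset_iff_of_subset]
    · refine ⟨v, Finset.mem_filter.mpr ⟨hv, Relation.ReflTransGen.refl⟩, ?_⟩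
      intro hcon
      rw [Finset.mem_filter] at hcon
      exact hacyc v (Relation.TransGen.tail' hcon.2 hadj)
    · intro w hw
      rw [Finset.mem_filter] at hw ⊢
      exact ⟨hw.1, hw.2.tail hadj⟩
  exact absurd (hmin u hu) (not_le.mpr (Finset.card_lt_card hss))

private lemma reach_source' (hAdjV : ∀ u v, Adj u v → u ∈ V ∧ v ∈ V) {s t : ℕ}
    (hs : s ∈ sourcesOf V Adj) (h : Relation.ReflTransGen Adj t s) : t = s := by
  rcases h.cases_tail with he | ⟨c, _, hc⟩
  · exact he.symm
  · exact absurd ⟨c, (hAdjV c s hc).1, hc⟩ (Finset.mem_filter.mp hs).2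

private lemma edge_inj' (hAdjV : ∀ u v, Adj u v → u ∈ V ∧ v ∈ V) {s t : ℕ}
    (hs : s ∈ sourcesOf V Adj) (ht : t ∈ sourcesOf V Adj)
    (he : (V.filter fun v => v ∈ Reach Adj s) = V.filter fun v => v ∈ Reach Adj t) : s = t := by
  have hsmem : s ∈ V.filter fun v => v ∈ Reach Adj s :=
    Finset.mem_filter.mpr ⟨source_mem' hs, Relation.ReflTransGen.refl⟩
  rw [he, Finset.mem_filter] at hsmem
  exact (reach_source' hAdjV hs hsmem.2).symm

private lemma reachSet_singleton' (s : ℕ) : ReachSet Adj ↑({s} : Finset ℕ) = Reach Adj s := by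
  ext x
  simp [ReachSet, Reach]

end Stmt10Aux

section Stmt10Main

open SimpleGraph

private lemma dtd_to_acyclic' {V : Finset ℕ} {Adj : ℕ → ℕ → Prop}
    (hV : V.Nonempty) (hAdjV : ∀ u v, Adj u v → u ∈ V ∧ v ∈ V)
    (hacyc : ∀ v, ¬ Relation.TransGen Adj v v) :
    ∀ (n : ℕ) (T : SimpleGraph (Fin n)) (β : Fin n → Finset ℕ),
      IsDTD V Adj T β → (∀ i, (β i).card ≤ 1) →
      IsAlphaAcyclic (reachHypergraph V Adj) := by
  intro n
  induction n using Nat.strong_induction_on with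
  | _ n IH =>
  cases n with
  | zero =>
    intro T β hdtd _
    obtain ⟨x⟩ := hdtd.1.isConnected.nonempty
    exact x.elim0
  | succ n'' =>
    intro T β hdtd hw
    obtain ⟨htree, hsub, hcover, hpath⟩ := hdtd
    by_cases hclean : (∀ i, (β i).Nonempty) ∧ Function.Injective β
    · -- clean case: T itself is (essentially) a join tree
      obtain ⟨hne, hinj⟩ := hclean
      have hcard : ∀ i, (β i).card = 1 := fun i =>
        le_antisymm (hw i) (Finset.card_pos.mpr (hne i))
      choose s hs using fun i => Finset.card_eq_one.mp (hcard i)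
      have hsrc : ∀ i, s i ∈ sourcesOf V Adj := fun i =>
        hsub i (by rw [hs i]; exact Finset.mem_singleton_self _)
      refine ⟨n'' + 1, T, fun i => V.filter fun v => v ∈ Reach Adj (s i), htree, ?_, ?_, ?_, ?_⟩
      · intro i j hij
        have hsij : s i = s j := edge_inj' hAdjV (hsrc i) (hsrc j) hij
        apply hinj
        rw [hs i, hs j, hsij]
      · intro i
        exact Finset.mem_image.mpr ⟨s i, hsrc i, rfl⟩
      · intro e he
        simp only [reachHypergraph, Finset.mem_image] at he
        obtain ⟨s0, hs0, rfl⟩ := he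
        obtain ⟨i, hi⟩ := hcover s0 hs0
        rw [hs i, Finset.mem_singleton] at hi
        exact ⟨i, by rw [hi]⟩
      · intro i j b hop x hx
        rw [Finset.mem_inter, Finset.mem_filter, Finset.mem_filter] at hx
        have hmem : x ∈ ReachSet Adj ↑(β i) ∩ ReachSet Adj ↑(β j) := by
          constructor
          · rw [hs i, reachSet_singleton']; exact hx.1.2
          · rw [hs j, reachSet_singleton']; exact hx.2.2
        have := hpath i j b hop hmem
        rw [hs b, reachSet_singleton'] at this
        exact Finset.mem_filter.mpr ⟨hx.1.1, this⟩
    · -- dirty case: find an adjacent pair to contract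
      have hdirty : ∃ (i a : Fin (n'' + 1)), T.Adj i a ∧ (β i = ∅ ∨ β i = β a) := by
        by_cases hA : ∀ i, (β i).Nonempty
        · -- duplicates
          have hninj : ¬ Function.Injective β := fun h => hclean ⟨hA, h⟩
          obtain ⟨i, j, heq, hne⟩ := Function.not_injective_iff.mp hninj
          obtain ⟨s0, hs0i⟩ := Finset.card_eq_one.mp
            (le_antisymm (hw i) (Finset.card_pos.mpr (hA i)))
          obtain ⟨w0⟩ := htree.isConnected.preconnected i j
          have hP : w0.bypass.IsPath := Walk.bypass_isPath w0
          generalize w0.bypass = P at hP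
          cases P with
          | nil => exact absurd rfl hne
          | @cons _ c _ h q =>
            refine ⟨i, c, h, Or.inr ?_⟩
            have hop : OnPath T i j c :=
              ⟨Walk.cons h q, hP, by
                rw [Walk.support_cons]
                exact List.mem_cons_of_mem _ q.start_mem_support⟩
            have hs0src : s0 ∈ sourcesOf V Adj :=
              hsub i (by rw [hs0i]; exact Finset.mem_singleton_self _)
            have hs0c : s0 ∈ ReachSet Adj ↑(β c) := by
              apply hpath i j c hop
              constructor
              · exact ⟨s0, by rw [hs0i]; exact Finset.mem_singleton_self _,
                  Relation.ReflTransGen.refl⟩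
              · exact ⟨s0, by rw [← heq, hs0i]; exact Finset.mem_singleton_self _,
                  Relation.ReflTransGen.refl⟩
            obtain ⟨t, htc, hts⟩ := hs0c
            rw [Finset.mem_coe] at htc
            have hts0 : t = s0 := reach_source' hAdjV hs0src hts
            rw [hs0i]
            symm
            apply Finset.eq_singleton_iff_unique_mem.mpr
            refine ⟨hts0 ▸ htc, ?_⟩
            intro x hx
            exact Finset.card_le_one.mp (hw c) x hx s0 (hts0 ▸ htc)
        · -- empty bag
          push_neg at hA
          obtain ⟨i, hie⟩ := hA
          by_cases hall : ∀ j : Fin (n'' + 1), j = i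
          · obtain ⟨s0, hs0⟩ := sources_nonempty' hV hAdjV hacyc
            obtain ⟨k, hk⟩ := hcover s0 hs0
            rw [hall k, hie] at hk
            exact absurd hk (Finset.notMem_empty _)
          · obtain ⟨j, hj⟩ := not_forall.mp hall
            obtain ⟨w⟩ := htree.isConnected.preconnected i j
            cases w with
            | nil => exact absurd rfl (Ne.symm hj)
            | cons h _ => exact ⟨i, _, h, Or.inl hie⟩
      obtain ⟨i, a, hia, hbag⟩ := hdirty
      -- the contraction machinery
      have hιinj : Function.Injective i.succAbove := Fin.succAbove_right_injective
      set ι := i.succAbove with hιdef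
      have hιne : ∀ z, ι z ≠ i := fun z => Fin.succAbove_ne i z
      have hρ0 : ∀ v : Fin (n'' + 1), ∃ z, ι z = if v = i then a else v := by
        intro v
        apply Fin.exists_succAbove_eq
        split
        · exact hia.ne'
        · next hvne => exact hvne
      choose ρ hρ using hρ0
      have hρι : ∀ z, ρ (ι z) = z := by
        intro z
        apply hιinj
        rw [hρ, if_neg (hιne z)]
      have hρi : ι (ρ i) = a := by rw [hρ, if_pos rfl]
      have hρne : ∀ v, v ≠ i → ι (ρ v) = v := by
        intro v hv
        rw [hρ, if_neg hv]
      obtain ⟨T', hadj'⟩ : ∃ T' : SimpleGraph (Fin n''), ∀ x y, T'.Adj x y ↔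
          (x ≠ y ∧ (T.Adj (ι x) (ι y) ∨ (T.Adj (ι x) i ∧ ι y = a) ∨
            (T.Adj (ι y) i ∧ ι x = a))) := by
        refine ⟨⟨fun x y => x ≠ y ∧ (T.Adj (ι x) (ι y) ∨ (T.Adj (ι x) i ∧ ι y = a) ∨
          (T.Adj (ι y) i ∧ ι x = a)), ?_, ?_⟩, fun _ _ => Iff.rfl⟩
        · constructor
          rintro x y ⟨hne, hc⟩
          refine ⟨hne.symm, ?_⟩
          rcases hc with h | h | h
          exacts [Or.inl h.symm, Or.inr (Or.inr h), Or.inr (Or.inl h)]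
        · constructor
          rintro x ⟨hne, _⟩
          exact hne rfl
      -- pushing walks from T to T'
      have step : ∀ {u b : Fin (n'' + 1)}, T.Adj u b → ρ u = ρ b ∨ T'.Adj (ρ u) (ρ b) := by
        intro u b h
        by_cases hu : u = i
        · subst hu
          by_cases hb : b = a
          · left
            apply hιinj
            rw [hρi, hρne b h.ne', hb]
          · right
            rw [hadj']
            refine ⟨?_, Or.inr (Or.inr ⟨?_, hρi⟩)⟩
            · intro hcon
              have h2 := congrArg ι hcon
              rw [hρi, hρne b h.ne'] at h2
              exact hb h2.symm
            · rw [hρne b h.ne']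
              exact h.symm
        · by_cases hb : b = i
          · subst hb
            by_cases hu2 : u = a
            · left
              apply hιinj
              rw [hρne u hu, hρi]
              exact hu2
            · right
              rw [hadj']
              refine ⟨?_, Or.inr (Or.inl ⟨?_, hρi⟩)⟩
              · intro hcon
                have h2 := congrArg ι hcon
                rw [hρne u hu, hρi] at h2
                exact hu2 h2
              · rw [hρne u hu]
                exact h
          · right
            rw [hadj']
            refine ⟨?_, Or.inl ?_⟩
            · intro hcon
              have h2 := congrArg ι hcon
              rw [hρne u hu, hρne b hb] at h2
              exact h.ne h2
            · rw [hρne u hu, hρne b hb]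
              exact h
      have push : ∀ {u v : Fin (n'' + 1)} (w : T.Walk u v),
          ∃ w' : T'.Walk (ρ u) (ρ v), ∀ z ∈ w'.support, ∃ c ∈ w.support, ρ c = z := by
        intro u v w
        induction w with
        | nil =>
          refine ⟨Walk.nil, ?_⟩
          intro z hz
          rw [Walk.support_nil, List.mem_singleton] at hz
          subst hz
          exact ⟨_, by rw [Walk.support_nil]; exact List.mem_singleton_self _, rfl⟩
        | @cons u b v h p ih =>
          obtain ⟨w', hw'⟩ := ih
          rcases step h with heq | hadj
          · refine ⟨w'.copy heq.symm rfl, ?_⟩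
            intro z hz
            rw [Walk.support_copy] at hz
            obtain ⟨c, hc, hcz⟩ := hw' z hz
            exact ⟨c, by rw [Walk.support_cons]; exact List.mem_cons_of_mem _ hc, hcz⟩
          · refine ⟨Walk.cons hadj w', ?_⟩
            intro z hz
            rw [Walk.support_cons] at hz
            rcases List.mem_cons.mp hz with rfl | hz
            · exact ⟨u, by rw [Walk.support_cons]; exact List.mem_cons_self, rfl⟩
            · obtain ⟨c, hc, hcz⟩ := hw' z hz
              exact ⟨c, by rw [Walk.support_cons]; exact List.mem_cons_of_mem _ hc, hcz⟩
      have hNE : Nonempty (Fin n'') := by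
        rcases Nat.eq_zero_or_pos n'' with h0 | hpos
        · subst h0
          exact absurd (Fin.ext (by have h1 := i.isLt; have h2 := a.isLt; omega)) hia.ne
        · exact ⟨⟨0, hpos⟩⟩
      have hT'conn : T'.Connected := by
        haveI := hNE
        apply Connected.mk
        intro x y
        obtain ⟨w⟩ := htree.isConnected.preconnected (ι x) (ι y)
        obtain ⟨w', _⟩ := push w
        exact ⟨w'.copy (hρι x) (hρι y)⟩
      -- lifting walks from T' to T
      have lift : ∀ {x y : Fin n''} (w : T'.Walk x y), ∃ W : T.Walk (ι x) (ι y),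
          ∀ E ∈ W.edges,
            (∃ u v, s(u, v) ∈ w.edges ∧ E = s(ι u, ι v)) ∨
            (∃ u v, s(u, v) ∈ w.edges ∧ T.Adj (ι u) i ∧ ι v = a ∧ E = s(ι u, i)) ∨
            E = s(i, a) := by
        intro x y w
        induction w with
        | nil => exact ⟨Walk.nil, by simp⟩
        | @cons x x' y h p ih =>
          obtain ⟨W', hW'⟩ := ih
          have up : ∀ E, E ∈ W'.edges →
              (∃ u v, s(u, v) ∈ (Walk.cons h p).edges ∧ E = s(ι u, ι v)) ∨
              (∃ u v, s(u, v) ∈ (Walk.cons h p).edges ∧ T.Adj (ι u) i ∧ ι v = a ∧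
                E = s(ι u, i)) ∨ E = s(i, a) := by
            intro E hE
            rcases hW' E hE with ⟨u, v, hm, hE'⟩ | ⟨u, v, hm, h3, h4, hE'⟩ | hE'
            · exact Or.inl ⟨u, v, by rw [Walk.edges_cons]; exact List.mem_cons_of_mem _ hm, hE'⟩
            · exact Or.inr (Or.inl ⟨u, v,
                by rw [Walk.edges_cons]; exact List.mem_cons_of_mem _ hm, h3, h4, hE'⟩)
            · exact Or.inr (Or.inr hE')
          have hhead : s(x, x') ∈ (Walk.cons h p).edges := by
            rw [Walk.edges_cons]
            exact List.mem_cons_self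
          rcases (hadj' x x').mp h with ⟨hne, h1 | ⟨h1, h2⟩ | ⟨h1, h2⟩⟩
          · refine ⟨Walk.cons h1 W', ?_⟩
            intro E hE
            rw [Walk.edges_cons] at hE
            rcases List.mem_cons.mp hE with rfl | hE
            · exact Or.inl ⟨x, x', hhead, rfl⟩
            · exact up E hE
          · have hia' : T.Adj i (ι x') := by rw [h2]; exact hia
            refine ⟨Walk.cons h1 (Walk.cons hia' W'), ?_⟩
            intro E hE
            rw [Walk.edges_cons, Walk.edges_cons] at hE
            rcases List.mem_cons.mp hE with rfl | hE
            · exact Or.inr (Or.inl ⟨x, x', hhead, h1, h2, rfl⟩)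
            rcases List.mem_cons.mp hE with rfl | hE
            · exact Or.inr (Or.inr (by rw [h2]))
            · exact up E hE
          · have e1 : T.Adj (ι x) i := by rw [h2]; exact hia.symm
            have e2 : T.Adj i (ι x') := h1.symm
            refine ⟨Walk.cons e1 (Walk.cons e2 W'), ?_⟩
            intro E hE
            rw [Walk.edges_cons, Walk.edges_cons] at hE
            rcases List.mem_cons.mp hE with rfl | hE
            · exact Or.inr (Or.inr (by rw [h2]; exact Sym2.eq_swap))
            rcases List.mem_cons.mp hE with rfl | hE
            · refine Or.inr (Or.inl ⟨x', x, ?_, h1, h2, Sym2.eq_swap⟩)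
              rw [Walk.edges_cons]
              exact List.mem_cons.mpr (Or.inl Sym2.eq_swap)
            · exact up E hE
      have Tbr : ∀ {u v : Fin (n'' + 1)}, T.Adj u v → ∀ W : T.Walk u v, s(u, v) ∈ W.edges :=
        fun hadj W => (isBridge_iff_adj_and_forall_walk_mem_edges.mp
          ((isAcyclic_iff_forall_adj_isBridge.mp htree.IsAcyclic) hadj)) W
      have bridge_half : ∀ x y : Fin n'', T'.Adj x y →
          (T.Adj (ι x) (ι y) ∨ (T.Adj (ι x) i ∧ ι y = a)) →
          ∀ w : T'.Walk x y, s(x, y) ∈ w.edges := by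
        intro x y hxy hcase w
        obtain ⟨W, hW⟩ := lift w
        rcases hcase with h1 | ⟨h1, h2⟩
        · have hmem := Tbr h1 W
          rcases hW _ hmem with ⟨u, v, hm, hE⟩ | ⟨u, v, _, _, _, hE⟩ | hE
          · rcases Sym2.eq_iff.mp hE with ⟨hxu, hyv⟩ | ⟨hxv, hyu⟩
            · rw [show u = x from (hιinj hxu).symm, show v = y from (hιinj hyv).symm] at hm
              exact hm
            · rw [show u = y from (hιinj hyu).symm, show v = x from (hιinj hxv).symm] at hm
              rwa [Sym2.eq_swap] at hm
          · rcases Sym2.eq_iff.mp hE with ⟨_, hyi⟩ | ⟨hxi, _⟩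
            · exact absurd hyi (hιne y)
            · exact absurd hxi (hιne x)
          · rcases Sym2.eq_iff.mp hE with ⟨hxi, _⟩ | ⟨_, hyi⟩
            · exact absurd hxi (hιne x)
            · exact absurd hyi (hιne y)
        · have hxa : ι x ≠ a := by
            intro hcon
            exact ((hadj' x y).mp hxy).1 (hιinj (by rw [hcon, h2]))
          have hmem : s(ι x, i) ∈ W.edges := by
            by_contra hn
            have hW2 := W.toDeleteEdges {s(ι x, i)} (by
              intro e he hemem
              rw [Set.mem_singleton_iff] at hemem
              exact hn (hemem ▸ he))
            have hadjD : (T.deleteEdges {s(ι x, i)}).Adj (ι y) i := by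
              rw [deleteEdges_adj]
              constructor
              · rw [h2]; exact hia.symm
              · rw [Set.mem_singleton_iff]
                intro hcon
                rcases Sym2.eq_iff.mp hcon with ⟨he1, _⟩ | ⟨he1, _⟩
                · exact hxa (he1 ▸ h2)
                · exact (hιne y) he1
            have hreach : (T.deleteEdges {s(ι x, i)}).Reachable (ι x) i :=
              ⟨hW2.append (Walk.cons hadjD Walk.nil)⟩
            exact (isBridge_iff.mp
              ((isAcyclic_iff_forall_adj_isBridge.mp htree.IsAcyclic) h1)) hreach
          rcases hW _ hmem with ⟨u, v, _, hE⟩ | ⟨u, v, hm, _, h4, hE⟩ | hE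
          · rcases Sym2.eq_iff.mp hE with ⟨_, hvi⟩ | ⟨_, hui⟩
            · exact absurd hvi.symm (hιne v)
            · exact absurd hui.symm (hιne u)
          · rcases Sym2.eq_iff.mp hE with ⟨hxu, _⟩ | ⟨hxi, _⟩
            · have hvy : v = y := hιinj (by rw [h4, h2])
              rw [show u = x from (hιinj hxu).symm, hvy] at hm
              exact hm
            · exact absurd hxi (hιne x)
          · rcases Sym2.eq_iff.mp hE with ⟨hxi, _⟩ | ⟨hxia, _⟩
            · exact absurd hxi (hιne x)
            · exact absurd hxia hxa
      have hT'tree : T'.IsTree := by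
        constructor
        · exact hT'conn
        · rw [isAcyclic_iff_forall_adj_isBridge]
          intro x y hxy
          rw [isBridge_iff_adj_and_forall_walk_mem_edges]
          refine fun p => ?_
          rcases ((hadj' x y).mp hxy).2 with h1 | h2 | h3
          · exact bridge_half x y hxy (Or.inl h1) p
          · exact bridge_half x y hxy (Or.inr h2) p
          · have := bridge_half y x (T'.adj_symm hxy) (Or.inr h3) p.reverse
            rw [Walk.edges_reverse, List.mem_reverse] at this
            rwa [Sym2.eq_swap] at this
      -- the contracted DTD
      apply IH n'' (Nat.lt_succ_self n'') T' (fun z => β (ι z)) ?_ (fun z => hw (ι z))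
      refine ⟨hT'tree, fun z => hsub (ι z), ?_, ?_⟩
      · intro s0 hs0
        obtain ⟨k, hk⟩ := hcover s0 hs0
        by_cases hki : k = i
        · subst hki
          rcases hbag with hb | hb
          · rw [hb] at hk
            exact absurd hk (Finset.notMem_empty _)
          · refine ⟨ρ a, ?_⟩
            show s0 ∈ β (ι (ρ a))
            rw [hρne a hia.ne', ← hb]
            exact hk
        · obtain ⟨z, hz⟩ := Fin.exists_succAbove_eq hki
          exact ⟨z, by show s0 ∈ β (ι z); rw [show ι z = k from hz]; exact hk⟩
      · intro x y b hop
        obtain ⟨p, hp, hb⟩ := hop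
        obtain ⟨w0⟩ := htree.isConnected.preconnected (ι x) (ι y)
        have hPpath : w0.bypass.IsPath := w0.bypass_isPath
        obtain ⟨w', hw'⟩ := push w0.bypass
        have hbmem : b ∈ w'.support := by
          obtain ⟨q, _, hqu⟩ := hT'tree.existsUnique_path x y
          have h1 : p = q := hqu p hp
          have h2 : (w'.copy (hρι x) (hρι y)).bypass = q :=
            hqu _ (Walk.bypass_isPath _)
          have h3 : b ∈ (w'.copy (hρι x) (hρι y)).bypass.support := by
            rw [h2, ← h1]; exact hb
          have h4 := Walk.support_bypass_subset _ h3
          rwa [Walk.support_copy] at h4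
        obtain ⟨c, hc, hcb⟩ := hw' b hbmem
        by_cases hci : c = i
        · rcases hbag with hbe | hba
          · intro z hz
            have := hpath (ι x) (ι y) i ⟨w0.bypass, hPpath, hci ▸ hc⟩ hz
            rw [hbe] at this
            simp [ReachSet] at this
          · have hιb : ι b = a := by rw [← hcb, hci, hρi]
            intro z hz
            have hz2 := hpath (ι x) (ι y) i ⟨w0.bypass, hPpath, hci ▸ hc⟩ hz
            show z ∈ ReachSet Adj ↑(β (ι b))
            rw [hιb, ← hba]
            exact hz2
        · have hιb : ι b = c := by rw [← hcb, hρne c hci]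
          intro z hz
          exact hpath (ι x) (ι y) (ι b) ⟨w0.bypass, hPpath, hιb ▸ hc⟩ hz

end Stmt10Main

theorem stmt10 (V : Finset ℕ) (Adj : ℕ → ℕ → Prop)
    (hV : V.Nonempty) (hAdjV : ∀ u v, Adj u v → u ∈ V ∧ v ∈ V)
    (hacyc : ∀ v, ¬ Relation.TransGen Adj v v) :
    dagTreewidth V Adj = 1 ↔ IsAlphaAcyclic (reachHypergraph V Adj) := by
  classical
  set S := {w : ℕ | ∃ (n : ℕ) (T : SimpleGraph (Fin n)) (β : Fin n → Finset ℕ),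
    IsDTD V Adj T β ∧ ∀ i, (β i).card ≤ w} with hSdef
  have htriv : (⊥ : SimpleGraph (Fin 1)).IsTree := by
    constructor
    · haveI : Nonempty (Fin 1) := ⟨0⟩
      apply SimpleGraph.Connected.mk
      intro u v
      rw [Subsingleton.elim u v]
    · exact SimpleGraph.isAcyclic_bot
  have hSne : S.Nonempty := by
    refine ⟨(sourcesOf V Adj).card, 1, ⊥, fun _ => sourcesOf V Adj, ⟨htriv, ?_, ?_, ?_⟩, ?_⟩
    · intro _
      exact subset_rfl
    · intro s hs
      exact ⟨0, hs⟩
    · intro _ _ _ _ x hx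
      exact hx.1
    · intro _
      exact le_rfl
  have h0 : 0 ∉ S := by
    rintro ⟨n, T, β, ⟨_, _, hcover, _⟩, hwid⟩
    obtain ⟨s0, hs0⟩ := sources_nonempty' hV hAdjV hacyc
    obtain ⟨k, hk⟩ := hcover s0 hs0
    have hk0 := hwid k
    rw [Nat.le_zero, Finset.card_eq_zero] at hk0
    rw [hk0] at hk
    exact absurd hk (Finset.notMem_empty _)
  have hdag : dagTreewidth V Adj = sInf S := rfl
  constructor
  · intro h
    rw [hdag] at h
    have hmem := Nat.sInf_mem hSne
    rw [h] at hmem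
    obtain ⟨n, T, β, hdtd, hwid⟩ := hmem
    exact dtd_to_acyclic' hV hAdjV hacyc n T β hdtd hwid
  · intro hAc
    obtain ⟨n, T, f, htree, hinj, hmem, hsurj, hpath⟩ := hAc
    have hchoose : ∀ i : Fin n, ∃ s, s ∈ sourcesOf V Adj ∧
        f i = V.filter fun v => v ∈ Reach Adj s := by
      intro i
      have hfi := hmem i
      simp only [reachHypergraph, Finset.mem_image] at hfi
      obtain ⟨s, hs, he⟩ := hfi
      exact ⟨s, hs, he.symm⟩
    choose σ hσ hfσ using hchoose
    have h1mem : 1 ∈ S := by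
      refine ⟨n, T, fun i => {σ i}, ⟨htree, ?_, ?_, ?_⟩, fun i => by simp⟩
      · intro i
        exact Finset.singleton_subset_iff.mpr (hσ i)
      · intro s hs
        have hse : (V.filter fun v => v ∈ Reach Adj s) ∈ (reachHypergraph V Adj).edges :=
          Finset.mem_image.mpr ⟨s, hs, rfl⟩
        obtain ⟨i, hi⟩ := hsurj _ hse
        have hσi : σ i = s := edge_inj' hAdjV (hσ i) hs (by rw [← hfσ i, hi])
        exact ⟨i, by rw [Finset.mem_singleton, hσi]⟩
      · intro i j b hop x hx
        obtain ⟨hx1, hx2⟩ := hx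
        rw [reachSet_singleton'] at hx1 hx2
        have hxV : x ∈ V := reach_mem' hAdjV (source_mem' (hσ i)) hx1
        have hfi : x ∈ f i := by
          rw [hfσ i]
          exact Finset.mem_filter.mpr ⟨hxV, hx1⟩
        have hfj : x ∈ f j := by
          rw [hfσ j]
          exact Finset.mem_filter.mpr ⟨hxV, hx2⟩
        have hfb := hpath i j b hop (Finset.mem_inter.mpr ⟨hfi, hfj⟩)
        rw [hfσ b, Finset.mem_filter] at hfb
        rw [reachSet_singleton']
        exact hfb.2
    rw [hdag]
    refine le_antisymm (Nat.sInf_le h1mem) ?_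
    rcases Nat.eq_zero_or_pos (sInf S) with h0' | hpos
    · exact absurd (h0' ▸ Nat.sInf_mem hSne) h0
    · exact hpos


end
end
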